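/- arXiv:2007.09229 — 10 statements merged into one kernel-verified Lean document; each statement's English description precedes it below -/
import Mathlib

section
/- Let α be a weak composition of length n with all parts ≥ 1 that avoids all of the patterns (0,1,2), (0,0,2,2), (0,0,2,1), (1,0,3,2), (1,0,2,2). Fix an index i_m with α_{i_m - 1} < α_{i_m}. If s < i_m - 1 and r > i_m, then either α_s ≥ α_r, or else α_s < α_r with α_s = α_{i_m - 1} and α_{i_m} = α_r = α_{i_m - 1} + 1. -/
open Finset

/-- `α` (on indices `1..n`) contains the composition pattern `β`. -/
def Contains (n : ℕ) (α : ℕ → ℕ) (β : List ℕ) : Prop :=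
  ∃ j : Fin β.length → ℕ, StrictMono j ∧ (∀ s, 1 ≤ j s ∧ j s ≤ n) ∧
    (∀ s t, α (j s) ≤ α (j t) ↔ β.get s ≤ β.get t) ∧
    (∀ s t, |(β.get s : ℤ) - (β.get t : ℤ)| ≤ |(α (j s) : ℤ) - (α (j t) : ℤ)|)

/-- `α` avoids all five patterns in `KM`. -/
def AvoidsKM (n : ℕ) (α : ℕ → ℕ) : Prop :=
  ∀ β ∈ [[0,1,2], [0,0,2,2], [0,0,2,1], [1,0,3,2], [1,0,2,2]], ¬ Contains n α β

lemma contains3 (n : ℕ) (α : ℕ → ℕ) (j1 j2 j3 : ℕ)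
    (h12 : j1 < j2) (h23 : j2 < j3) (h1 : 1 ≤ j1) (h3 : j3 ≤ n)
    (v12 : α j1 < α j2) (v23 : α j2 < α j3) :
    Contains n α [0,1,2] := by
  refine ⟨![j1,j2,j3], ?_, ?_, ?_, ?_⟩
  · intro a b hab
    fin_cases a <;> fin_cases b <;> simp_all (config := {decide := true}) <;> omega
  · intro t; fin_cases t <;> constructor <;> simp [List.get] <;> omega
  · intro u t; fin_cases u <;> fin_cases t <;> simp [List.get] <;> omega
  · intro u t; fin_cases u <;> fin_cases t <;> simp [List.get, ← Int.natCast_natAbs, -Nat.cast_natAbs] <;> omega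

section
variable (n : ℕ) (α : ℕ → ℕ) (j1 j2 j3 j4 : ℕ)
  (h12 : j1 < j2) (h23 : j2 < j3) (h34 : j3 < j4) (h1 : 1 ≤ j1) (h4 : j4 ≤ n)

include h12 h23 h34 h1 h4 in
lemma contains0022 (e12 : α j1 = α j2) (e34 : α j3 = α j4) (gap : α j1 + 2 ≤ α j3) :
    Contains n α [0,0,2,2] := by
  refine ⟨![j1,j2,j3,j4], ?_, ?_, ?_, ?_⟩
  · intro a b hab
    fin_cases a <;> fin_cases b <;> simp_all (config := {decide := true}) <;> omega
  · intro t; fin_cases t <;> constructor <;> simp [List.get] <;> omega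
  · intro u t; fin_cases u <;> fin_cases t <;> simp [List.get] <;> omega
  · intro u t; fin_cases u <;> fin_cases t <;> simp [List.get, ← Int.natCast_natAbs, -Nat.cast_natAbs] <;> omega

include h12 h23 h34 h1 h4 in
lemma contains0021 (e12 : α j1 = α j2) (l14 : α j1 < α j4) (l43 : α j4 < α j3) :
    Contains n α [0,0,2,1] := by
  refine ⟨![j1,j2,j3,j4], ?_, ?_, ?_, ?_⟩
  · intro a b hab
    fin_cases a <;> fin_cases b <;> simp_all (config := {decide := true}) <;> omega
  · intro t; fin_cases t <;> constructor <;> simp [List.get] <;> omega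
  · intro u t; fin_cases u <;> fin_cases t <;> simp [List.get] <;> omega
  · intro u t; fin_cases u <;> fin_cases t <;> simp [List.get, ← Int.natCast_natAbs, -Nat.cast_natAbs] <;> omega

include h12 h23 h34 h1 h4 in
lemma contains1032 (l21 : α j2 < α j1) (l14 : α j1 < α j4) (l43 : α j4 < α j3) :
    Contains n α [1,0,3,2] := by
  refine ⟨![j1,j2,j3,j4], ?_, ?_, ?_, ?_⟩
  · intro a b hab
    fin_cases a <;> fin_cases b <;> simp_all (config := {decide := true}) <;> omega
  · intro t; fin_cases t <;> constructor <;> simp [List.get] <;> omega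
  · intro u t; fin_cases u <;> fin_cases t <;> simp [List.get] <;> omega
  · intro u t; fin_cases u <;> fin_cases t <;> simp [List.get, ← Int.natCast_natAbs, -Nat.cast_natAbs] <;> omega

include h12 h23 h34 h1 h4 in
lemma contains1022 (l21 : α j2 < α j1) (l13 : α j1 < α j3) (e34 : α j3 = α j4) :
    Contains n α [1,0,2,2] := by
  refine ⟨![j1,j2,j3,j4], ?_, ?_, ?_, ?_⟩
  · intro a b hab
    fin_cases a <;> fin_cases b <;> simp_all (config := {decide := true}) <;> omega
  · intro t; fin_cases t <;> constructor <;> simp [List.get] <;> omega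
  · intro u t; fin_cases u <;> fin_cases t <;> simp [List.get] <;> omega
  · intro u t; fin_cases u <;> fin_cases t <;> simp [List.get, ← Int.natCast_natAbs, -Nat.cast_natAbs] <;> omega
end

theorem stmt1 (n : ℕ) (α : ℕ → ℕ) (hpos : ∀ i, 1 ≤ i → i ≤ n → 1 ≤ α i)
    (hav : AvoidsKM n α)
    (im : ℕ) (him2 : 2 ≤ im) (himn : im ≤ n) (hasc : α (im - 1) < α im)
    (s r : ℕ) (hs1 : 1 ≤ s) (hs : s < im - 1) (hr : im < r) (hrn : r ≤ n) :
    α r ≤ α s ∨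
      (α s < α r ∧ α s = α (im - 1) ∧ α im = α r ∧ α r = α (im - 1) + 1) := by
  by_cases hxy : α r ≤ α s
  · exact Or.inl hxy
  push_neg at hxy
  right
  have h012 := hav [0,1,2] (by simp)
  have h0022 := hav [0,0,2,2] (by simp)
  have h0021 := hav [0,0,2,1] (by simp)
  have h1032 := hav [1,0,3,2] (by simp)
  have h1022 := hav [1,0,2,2] (by simp)
  have hsi : s < im - 1 := hs
  have hii : im - 1 < im := by omega
  -- α (im-1) ≤ α s
  have hax : α (im - 1) ≤ α s := by
    by_contra h; push_neg at h
    exact h012 (contains3 n α s (im-1) im hsi hii hs1 himn h hasc)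
  -- α r ≤ α im
  have hyb : α r ≤ α im := by
    by_contra h; push_neg at h
    exact h012 (contains3 n α (im-1) im r hii hr (by omega) hrn hasc h)
  rcases eq_or_lt_of_le hax with hxa | hxa
  · rcases eq_or_lt_of_le hyb with hyb' | hyb'
    · -- α s = α(im-1), α r = α im
      have : ¬ (α (im-1) + 2 ≤ α im) := by
        intro hgap
        exact h0022 (contains0022 n α s (im-1) im r hsi hii hr hs1 hrn
          hxa.symm hyb'.symm (by omega))
      exact ⟨hxy, hxa.symm, hyb'.symm, by omega⟩
    · -- α r < α im : pattern (0,0,2,1)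
      exact absurd (contains0021 n α s (im-1) im r hsi hii hr hs1 hrn
        hxa.symm (by omega) hyb') h0021
  · rcases eq_or_lt_of_le hyb with hyb' | hyb'
    · -- α(im-1) < α s, α r = α im : pattern (1,0,2,2)
      exact absurd (contains1022 n α s (im-1) im r hsi hii hr hs1 hrn
        hxa (by omega) hyb'.symm) h1022
    · -- pattern (1,0,3,2)
      exact absurd (contains1032 n α s (im-1) im r hsi hii hr hs1 hrn
        hxa hxy hyb') h1032
end

section
/- If the skyline diagram D(α) of a weak composition α contains the southwest s×t rectangle (i.e., α_r ≥ t for all 1 ≤ r ≤ s), then every quasi-key tableau T of shape α satisfies T(r,c) = r for all 1 ≤ r ≤ s and 1 ≤ c ≤ t. -/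
open Finset

/-- `(i, j)` is a box of the skyline diagram `D(α)`. -/
def InD (n : ℕ) (α : ℕ → ℕ) (i j : ℕ) : Prop :=
  1 ≤ i ∧ i ≤ n ∧ 1 ≤ j ∧ j ≤ α i

/-- `T` is a quasi-key tableau of shape `α` (rules QKT1–QKT4). -/
structure IsQKT (n : ℕ) (α : ℕ → ℕ) (T : ℕ → ℕ → ℕ) : Prop where
  pos : ∀ i j, InD n α i j → 1 ≤ T i j
  rowDec : ∀ i j j', InD n α i j → InD n α i j' → j ≤ j' → T i j' ≤ T i j
  rowBound : ∀ i j, InD n α i j → T i j ≤ i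
  colDistinct : ∀ i i' j, InD n α i j → InD n α i' j → i ≠ i' → T i j ≠ T i' j
  firstColInc : ∀ i i', InD n α i 1 → InD n α i' 1 → i < i' → T i 1 < T i' 1
  qkt3 : ∀ r r' c, InD n α r c → InD n α r' c → r < r' → T r' c < T r c →
      InD n α r (c + 1) ∧ T r' c < T r (c + 1)
  qkt4 : ∀ r s c, r < s → α r < α s → InD n α r c → InD n α s (c + 1) →
      T r c < T s (c + 1)

theorem stmt2 (n : ℕ) (α : ℕ → ℕ) (T : ℕ → ℕ → ℕ) (hT : IsQKT n α T)
    (s t : ℕ) (hsn : s ≤ n) (hrect : ∀ r, 1 ≤ r → r ≤ s → t ≤ α r) :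
    ∀ r c, 1 ≤ r → r ≤ s → 1 ≤ c → c ≤ t → T r c = r := by
  intro r
  induction r using Nat.strong_induction_on with
  | _ r ih =>
    intro c hr hrs hc hct
    have hInD : InD n α r c := ⟨hr, hrs.trans hsn, hc, hct.trans (hrect r hr hrs)⟩
    have hub := hT.rowBound r c hInD
    rcases lt_or_eq_of_le hub with hlt | heq
    · exfalso
      have h1 := hT.pos r c hInD
      have hle : T r c ≤ s := le_trans (le_of_lt hlt) hrs
      have hInD' : InD n α (T r c) c := ⟨h1, hle.trans hsn, hc, hct.trans (hrect _ h1 hle)⟩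
      have hfix : T (T r c) c = T r c := ih (T r c) hlt c h1 hle hc hct
      exact hT.colDistinct r (T r c) c hInD hInD' (Nat.ne_of_gt hlt) hfix.symm
    · exact heq
end

section
/- Let α be a weak composition with all parts ≥ 1 avoiding all patterns in KM = {(0,1,2),(0,0,2,2),(0,0,2,1),(1,0,3,2),(1,0,2,2)}. Let T be a quasi-key tableau of shape α, let i_{m-1} be an index with α_{i_{m-1}-1} < α_{i_{m-1}} (or i_{m-1}=1), and let y be a box of D(α) with row(y) > i_{m-1}. Then T(y) ≥ i_{m-1} - 1. -/
open Finset

set_option linter.unnecessarySeqFocus false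

lemma habs (a b k : ℤ) (h : a + k ≤ b ∨ b + k ≤ a) : k ≤ |a - b| := by
  rcases le_total a b with h' | h'
  · rw [abs_of_nonpos (by omega)]; omega
  · rw [abs_of_nonneg (by omega)]; omega

lemma c012 (n : ℕ) (α : ℕ → ℕ) (i j k : ℕ) (h1 : 1 ≤ i) (hij : i < j) (hjk : j < k)
    (hk : k ≤ n) (v1 : α i < α j) (v2 : α j < α k) : Contains n α [0,1,2] := by
  refine ⟨![i,j,k], ?_, ?_, ?_, ?_⟩
  · intro s t hst; fin_cases s <;> fin_cases t <;> simp_all <;> omega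
  · intro s; fin_cases s <;> simp [List.get] <;> omega
  · intro s t; fin_cases s <;> fin_cases t <;> simp [List.get] <;> omega
  · intro s t; fin_cases s <;> fin_cases t <;> simp [List.get] <;> exact habs _ _ _ (by omega)

lemma c0022 (n : ℕ) (α : ℕ → ℕ) (i j k l : ℕ) (h1 : 1 ≤ i) (hij : i < j) (hjk : j < k)
    (hkl : k < l) (hl : l ≤ n) (v1 : α i = α j) (v2 : α i + 2 ≤ α k) (v3 : α k = α l) :
    Contains n α [0,0,2,2] := by
  refine ⟨![i,j,k,l], ?_, ?_, ?_, ?_⟩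
  · intro s t hst; fin_cases s <;> fin_cases t <;> simp_all <;> omega
  · intro s; fin_cases s <;> simp [List.get] <;> omega
  · intro s t; fin_cases s <;> fin_cases t <;> simp [List.get] <;> omega
  · intro s t; fin_cases s <;> fin_cases t <;> simp [List.get] <;> exact habs _ _ _ (by omega)

lemma c0021 (n : ℕ) (α : ℕ → ℕ) (i j k l : ℕ) (h1 : 1 ≤ i) (hij : i < j) (hjk : j < k)
    (hkl : k < l) (hl : l ≤ n) (v1 : α i = α j) (v2 : α i + 2 ≤ α k) (v3 : α i + 1 ≤ α l)
    (v4 : α l + 1 ≤ α k) : Contains n α [0,0,2,1] := by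
  refine ⟨![i,j,k,l], ?_, ?_, ?_, ?_⟩
  · intro s t hst; fin_cases s <;> fin_cases t <;> simp_all <;> omega
  · intro s; fin_cases s <;> simp [List.get] <;> omega
  · intro s t; fin_cases s <;> fin_cases t <;> simp [List.get] <;> omega
  · intro s t; fin_cases s <;> fin_cases t <;> simp [List.get] <;> exact habs _ _ _ (by omega)

lemma c1032 (n : ℕ) (α : ℕ → ℕ) (i j k l : ℕ) (h1 : 1 ≤ i) (hij : i < j) (hjk : j < k)
    (hkl : k < l) (hl : l ≤ n) (v1 : α j + 1 ≤ α i) (v2 : α j + 3 ≤ α k) (v3 : α j + 2 ≤ α l)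
    (v4 : α i + 2 ≤ α k) (v5 : α i + 1 ≤ α l) (v6 : α l + 1 ≤ α k) :
    Contains n α [1,0,3,2] := by
  refine ⟨![i,j,k,l], ?_, ?_, ?_, ?_⟩
  · intro s t hst; fin_cases s <;> fin_cases t <;> simp_all <;> omega
  · intro s; fin_cases s <;> simp [List.get] <;> omega
  · intro s t; fin_cases s <;> fin_cases t <;> simp [List.get] <;> omega
  · intro s t; fin_cases s <;> fin_cases t <;> simp [List.get] <;> exact habs _ _ _ (by omega)

lemma c1022 (n : ℕ) (α : ℕ → ℕ) (i j k l : ℕ) (h1 : 1 ≤ i) (hij : i < j) (hjk : j < k)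
    (hkl : k < l) (hl : l ≤ n) (v1 : α j + 1 ≤ α i) (v2 : α j + 2 ≤ α k) (v3 : α i + 1 ≤ α k)
    (v4 : α k = α l) : Contains n α [1,0,2,2] := by
  refine ⟨![i,j,k,l], ?_, ?_, ?_, ?_⟩
  · intro s t hst; fin_cases s <;> fin_cases t <;> simp_all <;> omega
  · intro s; fin_cases s <;> simp [List.get] <;> omega
  · intro s t; fin_cases s <;> fin_cases t <;> simp [List.get] <;> omega
  · intro s t; fin_cases s <;> fin_cases t <;> simp [List.get] <;> exact habs _ _ _ (by omega)

lemma pigeon (m : ℕ) (f : ℕ → ℕ) (hf : ∀ i, i ∈ Icc 1 m → f i ∈ Icc 1 m)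
    (hinj : ∀ i ∈ Icc 1 m, ∀ j ∈ Icc 1 m, f i = f j → i = j) (v : ℕ) (hv : v ∈ Icc 1 m) :
    ∃ i ∈ Icc 1 m, f i = v := by
  have himg : (Icc 1 m).image f = Icc 1 m := by
    apply Finset.eq_of_subset_of_card_le
    · intro x hx
      obtain ⟨i, hi, rfl⟩ := Finset.mem_image.mp hx
      exact hf i hi
    · rw [Finset.card_image_of_injOn (fun i hi j hj => hinj i hi j hj)]
  rw [← himg] at hv
  obtain ⟨i, hi, hfi⟩ := Finset.mem_image.mp hv
  exact ⟨i, hi, hfi⟩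

lemma firstCol (n : ℕ) (α : ℕ → ℕ) (hpos : ∀ i, 1 ≤ i → i ≤ n → 1 ≤ α i)
    (T : ℕ → ℕ → ℕ) (hT : IsQKT n α T) : ∀ i, 1 ≤ i → i ≤ n → T i 1 = i := by
  have hbox : ∀ i, 1 ≤ i → i ≤ n → InD n α i 1 := fun i h1 h2 =>
    ⟨h1, h2, le_refl 1, hpos i h1 h2⟩
  have ge : ∀ i, 1 ≤ i → i ≤ n → i ≤ T i 1 := by
    intro i
    induction i with
    | zero => omega
    | succ k ih =>
      intro _ h2
      by_cases hk : k = 0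
      · subst hk; exact hT.pos 1 1 (hbox 1 le_rfl (by omega))
      · have h := hT.firstColInc k (k+1) (hbox k (by omega) (by omega)) (hbox (k+1) (by omega) h2) (by omega)
        have := ih (by omega) (by omega)
        omega
  intro i h1 h2
  have := hT.rowBound i 1 (hbox i h1 h2)
  have := ge i h1 h2
  omega

theorem stmt3 (n : ℕ) (α : ℕ → ℕ) (hpos : ∀ i, 1 ≤ i → i ≤ n → 1 ≤ α i)
    (hav : AvoidsKM n α) (T : ℕ → ℕ → ℕ) (hT : IsQKT n α T)
    (p : ℕ) (hp : p = 1 ∨ (2 ≤ p ∧ p ≤ n ∧ α (p - 1) < α p))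
    (r c : ℕ) (hbox : InD n α r c) (hrow : p < r) :
    p - 1 ≤ T r c := by
  rcases Nat.lt_or_ge p 3 with hp3 | hp3
  · have := hT.pos r c hbox; omega
  have hdata : 2 ≤ p ∧ p ≤ n ∧ α (p - 1) < α p := by
    rcases hp with h | h
    · omega
    · exact h
  obtain ⟨hp2, hpn, hαp⟩ := hdata
  obtain ⟨hr1, hrn, hc1, hcα⟩ := hbox
  have hav012 := hav [0,1,2] (by simp)
  have hav0022 := hav [0,0,2,2] (by simp)
  have hav0021 := hav [0,0,2,1] (by simp)
  have hav1032 := hav [1,0,3,2] (by simp)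
  have hav1022 := hav [1,0,2,2] (by simp)
  have hfc := firstCol n α hpos T hT
  -- Lemma A: entries in row p-1 are at least p-2
  have lemA : ∀ c', 1 ≤ c' → c' ≤ α (p-1) → p - 2 ≤ T (p-1) c' := by
    intro c' h1 h2
    rcases Nat.lt_or_ge c' 2 with hc' | hc'
    · have : c' = 1 := by omega
      subst this
      rw [hfc (p-1) (by omega) (by omega)]
      omega
    obtain ⟨d, rfl⟩ : ∃ d, c' = d + 1 := ⟨c' - 1, by omega⟩
    by_contra hcon
    push_neg at hcon
    have hboxp1 : InD n α (p-1) (d+1) := ⟨by omega, by omega, by omega, h2⟩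
    have hv1 : 1 ≤ T (p-1) (d+1) := hT.pos _ _ hboxp1
    -- every row i ≤ p-3 has α i ≥ d+1
    have hall : ∀ i, 1 ≤ i → i ≤ p - 3 → d + 1 ≤ α i := by
      intro i hi1 hi2
      by_contra hαi
      push_neg at hαi
      exact hav012 (c012 n α i (p-1) p hi1 (by omega) (by omega) hpn (by omega) hαp)
    have := pigeon (p-3) (fun i => T i (d+1))
      (fun i hi => by
        simp only [Finset.mem_Icc] at hi ⊢
        have hb : InD n α i (d+1) := ⟨by omega, by omega, by omega, hall i hi.1 hi.2⟩
        exact ⟨hT.pos i (d+1) hb, le_trans (hT.rowBound i (d+1) hb) hi.2⟩)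
      (fun i hi j hj hij => by
        simp only [Finset.mem_Icc] at hi hj
        by_contra hne
        exact hT.colDistinct i j (d+1) ⟨by omega, by omega, by omega, hall i hi.1 hi.2⟩
          ⟨by omega, by omega, by omega, hall j hj.1 hj.2⟩ hne hij)
      (T (p-1) (d+1)) (Finset.mem_Icc.mpr ⟨hv1, by omega⟩)
    obtain ⟨i, hi, hfi⟩ := this
    simp only [Finset.mem_Icc] at hi
    exact hT.colDistinct i (p-1) (d+1) ⟨by omega, by omega, by omega, hall i hi.1 hi.2⟩
      hboxp1 (by omega) hfi
  -- main argument
  rcases Nat.lt_or_ge c 2 with hc2 | hc2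
  · have : c = 1 := by omega
    subst this
    rw [hfc r hr1 hrn]
    omega
  obtain ⟨d, rfl⟩ : ∃ d, c = d + 1 := ⟨c - 1, by omega⟩
  by_contra hcon
  push_neg at hcon
  have hboxr : InD n α r (d+1) := ⟨hr1, hrn, hc1, hcα⟩
  have hv1 : 1 ≤ T r (d+1) := hT.pos _ _ hboxr
  -- α r ≤ α p
  have hrp : α r ≤ α p := by
    by_contra h
    push_neg at h
    exact hav012 (c012 n α (p-1) p r (by omega) (by omega) hrow hrn hαp h)
  by_cases hcase : d ≤ α (p-1) ∧ α (p-1) < α r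
  · -- use qkt4 with row p-1 at column d
    have h4 := hT.qkt4 (p-1) r d (by omega) hcase.2
      ⟨by omega, by omega, by omega, hcase.1⟩ hboxr
    have := lemA d (by omega) hcase.1
    omega
  · -- every row i ≤ p-2 has α i ≥ d+1
    have hall : ∀ i, 1 ≤ i → i ≤ p - 2 → d + 1 ≤ α i := by
      intro i hi1 hi2
      by_contra hαi
      push_neg at hαi
      have ha : α i ≤ d := by omega
      push_neg at hcase
      rcases Nat.lt_or_ge (α (p-1)) d with hb | hb
      · -- α (p-1) ≤ d - 1
        have hb' : α (p-1) + 1 ≤ d := by omega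
        rcases Nat.lt_trichotomy (α i) (α (p-1)) with h' | h' | h'
        · exact hav012 (c012 n α i (p-1) p hi1 (by omega) (by omega) hpn h' hαp)
        · -- α i = α (p-1)
          rcases Nat.lt_or_ge (α r) (α p) with hCB | hCB
          · exact hav0021 (c0021 n α i (p-1) p r hi1 (by omega) (by omega) hrow hrn
              h' (by omega) (by omega) (by omega))
          · have hCB' : α r = α p := by omega
            exact hav0022 (c0022 n α i (p-1) p r hi1 (by omega) (by omega) hrow hrn
              h' (by omega) (by omega))
        · -- α (p-1) < α i
          rcases Nat.lt_or_ge (α r) (α p) with hCB | hCB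
          · exact hav1032 (c1032 n α i (p-1) p r hi1 (by omega) (by omega) hrow hrn
              h' (by omega) (by omega) (by omega) (by omega) (by omega))
          · have hCB' : α r = α p := by omega
            exact hav1022 (c1022 n α i (p-1) p r hi1 (by omega) (by omega) hrow hrn
              h' (by omega) (by omega) (by omega))
      · -- d ≤ α (p-1), so α r ≤ α (p-1) by hcase
        have hba : α r ≤ α (p-1) := hcase hb
        -- then α (p-1) ≥ d+1 > α i, and α (p-1) < α p
        exact hav012 (c012 n α i (p-1) p hi1 (by omega) (by omega) hpn (by omega) hαp)
    have := pigeon (p-2) (fun i => T i (d+1))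
      (fun i hi => by
        simp only [Finset.mem_Icc] at hi ⊢
        have hb : InD n α i (d+1) := ⟨by omega, by omega, by omega, hall i hi.1 hi.2⟩
        exact ⟨hT.pos i (d+1) hb, le_trans (hT.rowBound i (d+1) hb) hi.2⟩)
      (fun i hi j hj hij => by
        simp only [Finset.mem_Icc] at hi hj
        by_contra hne
        exact hT.colDistinct i j (d+1) ⟨by omega, by omega, by omega, hall i hi.1 hi.2⟩
          ⟨by omega, by omega, by omega, hall j hj.1 hj.2⟩ hne hij)
      (T r (d+1)) (Finset.mem_Icc.mpr ⟨hv1, by omega⟩)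
    obtain ⟨i, hi, hfi⟩ := this
    simp only [Finset.mem_Icc] at hi
    exact hT.colDistinct i r (d+1) ⟨by omega, by omega, by omega, hall i hi.1 hi.2⟩
      hboxr (by omega) hfi
end

section
/- Let α be a weak composition with all parts ≥ 1 avoiding all patterns in KM. Let T be a quasi-key tableau of shape α. Suppose b lies in the m-th segment of α (m > 1) with α_{i_{m-1}-1} < α_b, and let c > α_{i_{m-1}-1} + 1. Then there is at most one box x of D(α) with row(x) ≥ b, column(x) = c, and T(x) < b. -/
open Finset

lemma no012 {n : ℕ} {α : ℕ → ℕ} (hav : AvoidsKM n α) {i j k : ℕ}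
    (h1 : 1 ≤ i) (hij : i < j) (hjk : j < k) (hkn : k ≤ n)
    (o1 : α i < α j) (o2 : α j < α k) (g : α i + 2 ≤ α k) : False := by
  apply hav [0,1,2] (by simp)
  refine ⟨![i,j,k], ?_, ?_, ?_, ?_⟩
  · intro s t hst
    fin_cases s <;> fin_cases t <;> simp_all <;> omega
  · intro s; fin_cases s <;> simp <;> omega
  · intro s t; fin_cases s <;> fin_cases t <;> simp [show ((3:Fin 4):ℕ) = 3 from rfl] <;> omega
  · intro s t; fin_cases s <;> fin_cases t <;>
      simp [abs_eq_max_neg, max_le_iff, le_max_iff, show ((3:Fin 4):ℕ) = 3 from rfl] <;> omega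

lemma no0022 {n : ℕ} {α : ℕ → ℕ} (hav : AvoidsKM n α) {i j k l : ℕ}
    (h1 : 1 ≤ i) (hij : i < j) (hjk : j < k) (hkl : k < l) (hln : l ≤ n)
    (e1 : α i = α j) (o1 : α j < α k) (e2 : α k = α l) (g : α i + 2 ≤ α k) : False := by
  apply hav [0,0,2,2] (by simp)
  refine ⟨![i,j,k,l], ?_, ?_, ?_, ?_⟩
  · intro s t hst
    fin_cases s <;> fin_cases t <;> simp_all <;> omega
  · intro s; fin_cases s <;> simp <;> omega
  · intro s t; fin_cases s <;> fin_cases t <;> simp [show ((3:Fin 4):ℕ) = 3 from rfl] <;> omega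
  · intro s t; fin_cases s <;> fin_cases t <;>
      simp [abs_eq_max_neg, max_le_iff, le_max_iff, show ((3:Fin 4):ℕ) = 3 from rfl] <;> omega

lemma no0021 {n : ℕ} {α : ℕ → ℕ} (hav : AvoidsKM n α) {i j k l : ℕ}
    (h1 : 1 ≤ i) (hij : i < j) (hjk : j < k) (hkl : k < l) (hln : l ≤ n)
    (e1 : α i = α j) (o1 : α j < α l) (o2 : α l < α k) (g : α i + 2 ≤ α k) : False := by
  apply hav [0,0,2,1] (by simp)
  refine ⟨![i,j,k,l], ?_, ?_, ?_, ?_⟩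
  · intro s t hst
    fin_cases s <;> fin_cases t <;> simp_all <;> omega
  · intro s; fin_cases s <;> simp <;> omega
  · intro s t; fin_cases s <;> fin_cases t <;> simp [show ((3:Fin 4):ℕ) = 3 from rfl] <;> omega
  · intro s t; fin_cases s <;> fin_cases t <;>
      simp [abs_eq_max_neg, max_le_iff, le_max_iff, show ((3:Fin 4):ℕ) = 3 from rfl] <;> omega

lemma no1032 {n : ℕ} {α : ℕ → ℕ} (hav : AvoidsKM n α) {i j k l : ℕ}
    (h1 : 1 ≤ i) (hij : i < j) (hjk : j < k) (hkl : k < l) (hln : l ≤ n)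
    (o1 : α j < α i) (o2 : α i < α l) (o3 : α l < α k)
    (g1 : α i + 2 ≤ α k) (g2 : α j + 3 ≤ α k) (g3 : α j + 2 ≤ α l) : False := by
  apply hav [1,0,3,2] (by simp)
  refine ⟨![i,j,k,l], ?_, ?_, ?_, ?_⟩
  · intro s t hst
    fin_cases s <;> fin_cases t <;> simp_all <;> omega
  · intro s; fin_cases s <;> simp <;> omega
  · intro s t; fin_cases s <;> fin_cases t <;> simp [show ((3:Fin 4):ℕ) = 3 from rfl] <;> omega
  · intro s t; fin_cases s <;> fin_cases t <;>
      simp [abs_eq_max_neg, max_le_iff, le_max_iff, show ((3:Fin 4):ℕ) = 3 from rfl] <;> omega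

lemma no1022 {n : ℕ} {α : ℕ → ℕ} (hav : AvoidsKM n α) {i j k l : ℕ}
    (h1 : 1 ≤ i) (hij : i < j) (hjk : j < k) (hkl : k < l) (hln : l ≤ n)
    (o1 : α j < α i) (o2 : α i < α k) (e : α k = α l) (g : α j + 2 ≤ α k) : False := by
  apply hav [1,0,2,2] (by simp)
  refine ⟨![i,j,k,l], ?_, ?_, ?_, ?_⟩
  · intro s t hst
    fin_cases s <;> fin_cases t <;> simp_all <;> omega
  · intro s; fin_cases s <;> simp <;> omega
  · intro s t; fin_cases s <;> fin_cases t <;> simp [show ((3:Fin 4):ℕ) = 3 from rfl] <;> omega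
  · intro s t; fin_cases s <;> fin_cases t <;>
      simp [abs_eq_max_neg, max_le_iff, le_max_iff, show ((3:Fin 4):ℕ) = 3 from rfl] <;> omega

lemma key (n : ℕ) (α : ℕ → ℕ)
    (hav : AvoidsKM n α) (T : ℕ → ℕ → ℕ) (hT : IsQKT n α T)
    (p b : ℕ) (hp2 : 2 ≤ p) (hpn : p ≤ n) (hasc : α (p - 1) < α p)
    (hpb : p ≤ b) (hbn : b ≤ n) (hseg : ∀ t, p < t → t ≤ b → α t ≤ α (t - 1))
    (hab : α (p - 1) < α b) (c : ℕ) (hc : α (p - 1) + 1 < c)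
    (r r' : ℕ) (hbr : b ≤ r) (hbr' : b ≤ r') (hlt : r < r')
    (hrD : InD n α r c) (hr'D : InD n α r' c)
    (hTr : T r c < b) (hTr' : T r' c < b) : False := by
  obtain ⟨hr1, hrn, hc1, hcar⟩ := hrD
  obtain ⟨hr'1, hr'n, hc1', hcar'⟩ := hr'D
  have hp1 : 1 ≤ p - 1 := by omega
  have hpr : p - 1 < r := by omega
  -- Step 1 : α r' ≤ α r
  have h1 : α r' ≤ α r := by
    by_contra h
    exact no012 hav hp1 hpr hlt hr'n (by omega) (by omega) (by omega)
  -- Step 2 : every row below p-1 reaches column c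
  have step2 : ∀ s, 1 ≤ s → s < p - 1 → c ≤ α s := by
    intro s hs1 hsp
    by_contra hsc
    push_neg at hsc
    rcases lt_trichotomy (α s) (α (p - 1)) with h | h | h
    · exact no012 hav hs1 (by omega) (by omega) hrn h (by omega) (by omega)
    · rcases eq_or_lt_of_le h1 with he | hst
      · exact no0022 hav hs1 hsp (by omega) hlt hr'n h (by omega) he.symm (by omega)
      · exact no0021 hav hs1 hsp (by omega) hlt hr'n h (by omega) hst (by omega)
    · rcases eq_or_lt_of_le h1 with he | hst
      · exact no1022 hav hs1 hsp (by omega) hlt hr'n h (by omega) he.symm (by omega)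
      · exact no1032 hav hs1 hsp (by omega) hlt hr'n h (by omega) hst
          (by omega) (by omega) (by omega)
  -- Step 3 : rows p..b-1 reach column c
  have hcb : c ≤ α b := by
    rcases eq_or_lt_of_le hbr with he | hbrlt
    · rw [he]; exact hcar
    · by_contra h
      exact no012 hav hp1 (by omega) hbrlt hrn (by omega) (by omega) (by omega)
  have step3 : ∀ d t, p ≤ t → t + d = b → α b ≤ α t := by
    intro d
    induction d with
    | zero =>
        intro t h1' h2'
        have ht : t = b := by omega
        rw [ht]
    | succ d ih =>
        intro t h1' h2'
        have hs := hseg (t + 1) (by omega) (by omega)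
        have h2'' := ih (t + 1) (by omega) (by omega)
        have he : t + 1 - 1 = t := by omega
        rw [he] at hs
        omega
  -- Pigeonhole
  classical
  set S : Finset ℕ := (Finset.Ico 1 (p - 1) ∪ Finset.Ico p b) ∪ {r, r'} with hS
  have hmem : ∀ t, t ∈ S ↔ (1 ≤ t ∧ t < p - 1) ∨ (p ≤ t ∧ t < b) ∨ t = r ∨ t = r' := by
    intro t
    simp [hS, Finset.mem_union, Finset.mem_Ico, or_assoc]
    tauto
  have hboxes : ∀ t ∈ S, InD n α t c := by
    intro t ht
    rcases (hmem t).1 ht with h | h | h | h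
    · exact ⟨h.1, by omega, by omega, step2 t h.1 h.2⟩
    · have := step3 (b - t) t h.1 (by omega)
      exact ⟨by omega, by omega, by omega, by omega⟩
    · exact h ▸ ⟨hr1, hrn, hc1, hcar⟩
    · exact h ▸ ⟨hr'1, hr'n, hc1', hcar'⟩
  have himg : ∀ t ∈ S, T t c ∈ Finset.Icc 1 (b - 1) := by
    intro t ht
    have hbox := hboxes t ht
    have hposT := hT.pos t c hbox
    have hbd := hT.rowBound t c hbox
    rcases (hmem t).1 ht with h | h | h | h
    · exact Finset.mem_Icc.2 ⟨hposT, by omega⟩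
    · exact Finset.mem_Icc.2 ⟨hposT, by omega⟩
    · subst h; exact Finset.mem_Icc.2 ⟨hposT, by omega⟩
    · subst h; exact Finset.mem_Icc.2 ⟨hposT, by omega⟩
  have hinj : Set.InjOn (fun t => T t c) S := by
    intro x hx y hy hxy
    by_contra hne
    exact hT.colDistinct x y c (hboxes x hx) (hboxes y hy) hne hxy
  have hcard := Finset.card_le_card_of_injOn (fun t => T t c) himg hinj
  have hd1 : Disjoint (Finset.Ico 1 (p - 1)) (Finset.Ico p b) := by
    rw [Finset.disjoint_left]
    intro x hx hx'
    simp [Finset.mem_Ico] at hx hx'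
    omega
  have hd2 : Disjoint (Finset.Ico 1 (p - 1) ∪ Finset.Ico p b) ({r, r'} : Finset ℕ) := by
    rw [Finset.disjoint_left]
    intro x hx hx'
    simp [Finset.mem_union, Finset.mem_Ico] at hx
    simp [Finset.mem_insert] at hx'
    omega
  have hcS : S.card = b := by
    rw [hS, Finset.card_union_of_disjoint hd2, Finset.card_union_of_disjoint hd1]
    rw [Nat.card_Ico, Nat.card_Ico]
    have : ({r, r'} : Finset ℕ).card = 2 := by
      rw [Finset.card_insert_of_notMem (by simp; omega), Finset.card_singleton]
    omega
  have hIcc : (Finset.Icc 1 (b - 1)).card = b - 1 := by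
    rw [Nat.card_Icc]; omega
  omega

theorem stmt4 (n : ℕ) (α : ℕ → ℕ) (hpos : ∀ i, 1 ≤ i → i ≤ n → 1 ≤ α i)
    (hav : AvoidsKM n α) (T : ℕ → ℕ → ℕ) (hT : IsQKT n α T)
    (p b : ℕ) (hp2 : 2 ≤ p) (hpn : p ≤ n) (hasc : α (p - 1) < α p)
    (hpb : p ≤ b) (hbn : b ≤ n) (hseg : ∀ t, p < t → t ≤ b → α t ≤ α (t - 1))
    (hab : α (p - 1) < α b) (c : ℕ) (hc : α (p - 1) + 1 < c) :
    ∀ r r', b ≤ r → b ≤ r' → InD n α r c → InD n α r' c →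
      T r c < b → T r' c < b → r = r' := by
  intro r r' hbr hbr' hrD hr'D hTr hTr'
  rcases lt_trichotomy r r' with h | h | h
  · exact (key n α hav T hT p b hp2 hpn hasc hpb hbn hseg hab c hc
      r r' hbr hbr' h hrD hr'D hTr hTr').elim
  · exact h
  · exact (key n α hav T hT p b hp2 hpn hasc hpb hbn hseg hab c hc
      r' r hbr' hbr h hr'D hrD hTr' hTr).elim
end

section
/- Let α be a weak composition with all parts ≥ 1 avoiding all patterns in KM. If b lies in seg_m(α) and satisfies any of: b ∈ seg_1(α); or b ∈ seg_m^1(α) with α_{i_{m-1}-1} ≥ α_b; or b ∈ seg_m^2(α); or b ∈ seg_m^3(α); then every quasi-key tableau T of shape α has row b filled entirely with the entry b. -/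
open Finset

/-- Evaluation of `α` with the convention `α_t = 0` for `t > n`. -/
def Aev (n : ℕ) (α : ℕ → ℕ) (t : ℕ) : ℕ := if t ≤ n then α t else 0

/-- `p = i_{m-1}` and `q = i_m` are consecutive segment boundaries of `α`,
so that `seg_m(α) = {p, ..., q-1}`. -/
def SegData (n : ℕ) (α : ℕ → ℕ) (p q : ℕ) : Prop :=
  (p = 1 ∨ (2 ≤ p ∧ p ≤ n ∧ α (p - 1) < α p)) ∧ p < q ∧ q ≤ n + 1 ∧
  (∀ t, p < t → t < q → α t ≤ α (t - 1)) ∧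
  (q = n + 1 ∨ (q ≤ n ∧ α (q - 1) < α q))

/-- Any strictly increasing triple of values witnesses containment of `(0,1,2)`. -/
lemma contains012 (n : ℕ) (α : ℕ → ℕ) (a b c : ℕ) (h1 : 1 ≤ a) (hab : a < b)
    (hbc : b < c) (hcn : c ≤ n) (v1 : α a < α b) (v2 : α b < α c) :
    Contains n α [0,1,2] := by
  have key : ∀ (x y d : ℕ), (x + d ≤ y ∨ y + d ≤ x) → (d : ℤ) ≤ |(x : ℤ) - (y : ℤ)| := by
    intro x y d h
    rw [le_abs]
    push_cast
    omega
  refine ⟨![a, b, c], ?_, ?_, ?_, ?_⟩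
  · intro s t hst
    fin_cases s <;> fin_cases t <;>
      simp_all [Matrix.cons_val_zero, Matrix.cons_val_one] <;> omega
  · intro s; fin_cases s <;> simp <;> omega
  · intro s t
    fin_cases s <;> fin_cases t <;> simp <;> omega
  · intro s t
    fin_cases s <;> fin_cases t <;> simp <;>
      first
      | exact key _ _ 1 (by omega)
      | exact key _ _ 2 (by omega)
      | positivity

theorem stmt5 (n : ℕ) (α : ℕ → ℕ) (hpos : ∀ i, 1 ≤ i → i ≤ n → 1 ≤ α i)
    (hav : AvoidsKM n α) (T : ℕ → ℕ → ℕ) (hT : IsQKT n α T)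
    (p q b : ℕ) (hseg : SegData n α p q) (hpb : p ≤ b) (hbq : b < q)
    (hcase :
      p = 1 ∨
      (2 ≤ p ∧ Aev n α q ≤ α b ∧ α b ≤ α (p - 1)) ∨
      (α b < Aev n α q ∧ (2 ≤ p → α b < α (p - 1)) ∧ b + 1 < q) ∨
      (b + 1 = q ∧ q ≤ n)) :
    ∀ c, 1 ≤ c → c ≤ α b → T b c = b := by
  obtain ⟨hp, hpq, hqn, hmono, hqend⟩ := hseg
  have hav012 : ¬ Contains n α [0,1,2] := hav [0,1,2] (by simp)
  have hbn : b ≤ n := by omega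
  -- within the segment, α is weakly decreasing
  have segmono : ∀ r, p ≤ r → r ≤ b → α b ≤ α r := by
    intro r hpr hrb
    have aux : ∀ d, r + d < q → α (r + d) ≤ α r := by
      intro d
      induction d with
      | zero => simp
      | succ d ih =>
        intro h
        have h1 := hmono (r + d + 1) (by omega) (by omega)
        have h2 : r + d + 1 - 1 = r + d := by omega
        rw [h2] at h1
        exact le_trans h1 (ih (by omega))
    have := aux (b - r) (by omega)
    have hb : r + (b - r) = b := by omega
    rwa [hb] at this
  -- the key fact: every row below b is at least as long as row b
  have keyA : ∀ r, 1 ≤ r → r < b → α b ≤ α r := by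
    intro r h1 hrb
    by_contra hcon
    push_neg at hcon
    rcases hcase with h | ⟨hp2, _, hbp1⟩ | ⟨h3a, _, _⟩ | ⟨hq1, hq2⟩
    · -- p = 1 : segment monotone
      exact absurd (segmono r (by omega) (le_of_lt hrb)) (by omega)
    · -- seg^1 case with α (p-1) ≥ α b
      rcases le_or_gt p r with hpr | hrp
      · exact absurd (segmono r hpr (le_of_lt hrb)) (by omega)
      · rcases hp with hp1 | ⟨hp2', hpn, hinc⟩
        · omega
        · rcases eq_or_lt_of_le (show r ≤ p - 1 by omega) with heq | hlt
          · rw [heq] at hcon; omega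
          · exact hav012 (contains012 n α r (p - 1) p h1 (by omega) (by omega)
              hpn (by omega) hinc)
    · -- seg^2 case: α b < Aev n α q
      have hqle : q ≤ n := by
        by_contra hq
        rw [Aev, if_neg hq] at h3a
        omega
      have hval : α b < α q := by
        simpa [Aev, hqle] using h3a
      exact hav012 (contains012 n α r b q h1 hrb hbq hqle hcon hval)
    · -- seg^3 case: b + 1 = q ≤ n
      rcases hqend with h | ⟨_, hinc⟩
      · omega
      · have hb1 : q - 1 = b := by omega
        rw [hb1] at hinc
        exact hav012 (contains012 n α r b q h1 hrb hbq hq2 hcon hinc)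
  intro c hc1 hc2
  have main : ∀ r, 1 ≤ r → r ≤ b → T r c = r := by
    intro r
    induction r using Nat.strong_induction_on with
    | _ r ih =>
      intro h1 hrb
      have hαr : α b ≤ α r := by
        rcases eq_or_lt_of_le hrb with h | h
        · rw [h]
        · exact keyA r h1 h
      have hD : InD n α r c := ⟨h1, le_trans hrb hbn, hc1, le_trans hc2 hαr⟩
      have hub := hT.rowBound r c hD
      have hlb := hT.pos r c hD
      rcases eq_or_lt_of_le hub with h | h
      · exact h
      · exfalso
        set v := T r c with hv
        have hv1 : 1 ≤ v := hlb
        have hvr : v < r := h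
        have hTv : T v c = v := ih v hvr hv1 (by omega)
        exact hT.colDistinct r v c hD
          ⟨hv1, by omega, hc1, le_trans hc2 (keyA v hv1 (by omega))⟩
          (by omega) (by rw [hTv])
  exact main b (by omega) le_rfl
end

section
/- Let α be a weak composition with all parts ≥ 1 avoiding all patterns in KM, let m > 1, let i ∈ seg_m^1(α) with α_{i_{m-1}-1} < α_i. Then α_i ≥ α_j for all j ≥ i. -/
open Finset

theorem stmt7 (n : ℕ) (α : ℕ → ℕ) (hpos : ∀ i, 1 ≤ i → i ≤ n → 1 ≤ α i)
    (hav : AvoidsKM n α) (p q : ℕ) (hseg : SegData n α p q) (hp2 : 2 ≤ p)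
    (i : ℕ) (hpi : p ≤ i) (hiq : i < q) (hseg1 : Aev n α q ≤ α i)
    (hlt : α (p - 1) < α i) :
    ∀ j, i ≤ j → j ≤ n → α j ≤ α i := by
  obtain ⟨hb, hpq, hqn, hdec, hq⟩ := hseg
  have hpn : p ≤ n := by
    rcases hb with h1 | ⟨_, h, _⟩
    · omega
    · exact h
  -- within the segment, values are ≤ α i
  have hwithin : ∀ t, i ≤ t → t < q → α t ≤ α i := by
    intro t
    induction t with
    | zero => intro h1 h2; omega
    | succ s ih =>
      intro hit htq
      rcases Nat.eq_or_lt_of_le hit with h | h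
      · rw [h]
      · have := hdec (s + 1) (by omega) htq
        simp only [Nat.add_sub_cancel] at this
        exact this.trans (ih (by omega) (by omega))
  intro j hij hjn
  by_contra hcon
  push_neg at hcon
  have hjq : q ≤ j := by
    by_contra h
    push_neg at h
    exact absurd (hwithin j hij h) (by omega)
  exact hav [0, 1, 2] (by simp) ⟨![p - 1, i, j], by
    intro s t hst
    fin_cases s <;> fin_cases t <;> simp_all <;> omega, by
    intro s
    fin_cases s <;> simp <;> omega, by
    intro s t
    fin_cases s <;> fin_cases t <;> simp <;> omega, by
    intro s t
    fin_cases s <;> fin_cases t <;>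
      · simp only [List.get, Matrix.cons_val', Matrix.cons_val_zero, Matrix.cons_val_one,
          Matrix.head_cons, Matrix.empty_val', Matrix.cons_val_fin_one, Matrix.head_fin_const]
        rw [le_abs] <;> norm_num <;> omega⟩
end

section
/- If α is a weak composition of length n with all parts ≥ 1 that avoids all patterns in KM = {(0,1,2),(0,0,2,2),(0,0,2,1),(1,0,3,2),(1,0,2,2)}, and β is obtained from α by a single left swap (interchanging α_i < α_j with i < j), then β also avoids all patterns in KM. -/
open Finset

/-- `β` is obtained from `α` by a single left swap. -/
def LeftSwapped (n : ℕ) (α β : ℕ → ℕ) : Prop :=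
  ∃ i j, 1 ≤ i ∧ i < j ∧ j ≤ n ∧ α i < α j ∧ β i = α j ∧ β j = α i ∧
    ∀ t, t ≠ i → t ≠ j → β t = α t

/-- `γ ∈ lswap(α)`: `γ` is obtained from `α` by a sequence of left swaps. -/
def InLSwap (n : ℕ) (α γ : ℕ → ℕ) : Prop :=
  Relation.ReflTransGen (LeftSwapped n) α γ

/-- `γ >_lex τ` on the entries indexed `1..n`. -/
def LexGT (n : ℕ) (γ τ : ℕ → ℕ) : Prop :=
  ∃ b, 1 ≤ b ∧ b ≤ n ∧ (∀ s, 1 ≤ s → s < b → γ s = τ s) ∧ τ b < γ b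

lemma absnat (x y : ℕ) : |(x:ℤ) - (y:ℤ)| = ((x - y : ℕ) : ℤ) + ((y - x : ℕ) : ℤ) := by
  rcases le_total x y with h|h
  · rw [abs_of_nonpos (by omega)]; omega
  · rw [abs_of_nonneg (by omega)]; omega

lemma fv30 : ((0:Fin 3):ℕ) = 0 := rfl
lemma fv31 : ((1:Fin 3):ℕ) = 1 := rfl
lemma fv32 : ((2:Fin 3):ℕ) = 2 := rfl
lemma fv40 : ((0:Fin 4):ℕ) = 0 := rfl
lemma fv41 : ((1:Fin 4):ℕ) = 1 := rfl
lemma fv42 : ((2:Fin 4):ℕ) = 2 := rfl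
lemma fv43 : ((3:Fin 4):ℕ) = 3 := rfl

lemma c012_s8 (n : ℕ) (γ : ℕ → ℕ) :
    Contains n γ [0,1,2] ↔ ∃ a b c, 1 ≤ a ∧ a < b ∧ b < c ∧ c ≤ n ∧ γ a < γ b ∧ γ b < γ c := by
  constructor
  · rintro ⟨f, hmono, hbd, hiff, -⟩
    have h1 : γ (f ⟨0, by norm_num⟩) ≤ γ (f ⟨1, by norm_num⟩) :=
      (hiff ⟨0, by norm_num⟩ ⟨1, by norm_num⟩).2 (by decide)
    have h2 : ¬ γ (f ⟨1, by norm_num⟩) ≤ γ (f ⟨0, by norm_num⟩) := fun h => by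
      have := (hiff ⟨1, by norm_num⟩ ⟨0, by norm_num⟩).1 h; revert this; decide
    have h3 : γ (f ⟨1, by norm_num⟩) ≤ γ (f ⟨2, by norm_num⟩) :=
      (hiff ⟨1, by norm_num⟩ ⟨2, by norm_num⟩).2 (by decide)
    have h4 : ¬ γ (f ⟨2, by norm_num⟩) ≤ γ (f ⟨1, by norm_num⟩) := fun h => by
      have := (hiff ⟨2, by norm_num⟩ ⟨1, by norm_num⟩).1 h; revert this; decide
    exact ⟨f ⟨0, by norm_num⟩, f ⟨1, by norm_num⟩, f ⟨2, by norm_num⟩, (hbd ⟨0, by norm_num⟩).1,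
      hmono (by decide), hmono (by decide), (hbd ⟨2, by norm_num⟩).2, by omega, by omega⟩
  · rintro ⟨a, b, c, h1, h2, h3, h4, h5, h6⟩
    refine ⟨![a,b,c], ?_, ?_, ?_, ?_⟩
    · intro s t hst
      fin_cases s <;> fin_cases t <;> simp_all <;> omega
    · intro s; fin_cases s <;> simp <;> omega
    · intro s t; fin_cases s <;> fin_cases t <;> simp [fv30,fv31,fv32] <;> omega
    · intro s t; fin_cases s <;> fin_cases t <;> simp [fv30,fv31,fv32,absnat] <;> omega

lemma c0022_s8 (n : ℕ) (γ : ℕ → ℕ) :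
    Contains n γ [0,0,2,2] ↔ ∃ a b c d, 1 ≤ a ∧ a < b ∧ b < c ∧ c < d ∧ d ≤ n ∧
      γ a = γ b ∧ γ c = γ d ∧ γ a + 2 ≤ γ c := by
  constructor
  · rintro ⟨f, hmono, hbd, hiff, hgap⟩
    have h1 : γ (f ⟨0, by norm_num⟩) ≤ γ (f ⟨1, by norm_num⟩) :=
      (hiff ⟨0, by norm_num⟩ ⟨1, by norm_num⟩).2 (by decide)
    have h2 : γ (f ⟨1, by norm_num⟩) ≤ γ (f ⟨0, by norm_num⟩) :=
      (hiff ⟨1, by norm_num⟩ ⟨0, by norm_num⟩).2 (by decide)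
    have h3 : γ (f ⟨2, by norm_num⟩) ≤ γ (f ⟨3, by norm_num⟩) :=
      (hiff ⟨2, by norm_num⟩ ⟨3, by norm_num⟩).2 (by decide)
    have h4 : γ (f ⟨3, by norm_num⟩) ≤ γ (f ⟨2, by norm_num⟩) :=
      (hiff ⟨3, by norm_num⟩ ⟨2, by norm_num⟩).2 (by decide)
    have h5 : γ (f ⟨0, by norm_num⟩) ≤ γ (f ⟨2, by norm_num⟩) :=
      (hiff ⟨0, by norm_num⟩ ⟨2, by norm_num⟩).2 (by decide)
    have g : |((0:ℕ):ℤ) - ((2:ℕ):ℤ)| ≤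
        |(γ (f ⟨0, by norm_num⟩) : ℤ) - (γ (f ⟨2, by norm_num⟩) : ℤ)| :=
      hgap ⟨0, by norm_num⟩ ⟨2, by norm_num⟩
    rw [absnat, absnat] at g
    exact ⟨f ⟨0, by norm_num⟩, f ⟨1, by norm_num⟩, f ⟨2, by norm_num⟩, f ⟨3, by norm_num⟩,
      (hbd ⟨0, by norm_num⟩).1, hmono (by decide), hmono (by decide), hmono (by decide),
      (hbd ⟨3, by norm_num⟩).2, by omega, by omega, by omega⟩
  · rintro ⟨a, b, c, d, h1, h2, h3, h4, h5, h6, h7, h8⟩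
    refine ⟨![a,b,c,d], ?_, ?_, ?_, ?_⟩
    · intro s t hst
      fin_cases s <;> fin_cases t <;> simp_all <;> omega
    · intro s; fin_cases s <;> simp <;> omega
    · intro s t; fin_cases s <;> fin_cases t <;> simp [fv40,fv41,fv42,fv43] <;> omega
    · intro s t; fin_cases s <;> fin_cases t <;> simp [fv40,fv41,fv42,fv43,absnat] <;> omega

lemma c0021_s8 (n : ℕ) (γ : ℕ → ℕ) :
    Contains n γ [0,0,2,1] ↔ ∃ a b c d, 1 ≤ a ∧ a < b ∧ b < c ∧ c < d ∧ d ≤ n ∧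
      γ a = γ b ∧ γ a < γ d ∧ γ d < γ c := by
  constructor
  · rintro ⟨f, hmono, hbd, hiff, -⟩
    have h1 : γ (f ⟨0, by norm_num⟩) ≤ γ (f ⟨1, by norm_num⟩) :=
      (hiff ⟨0, by norm_num⟩ ⟨1, by norm_num⟩).2 (by decide)
    have h2 : γ (f ⟨1, by norm_num⟩) ≤ γ (f ⟨0, by norm_num⟩) :=
      (hiff ⟨1, by norm_num⟩ ⟨0, by norm_num⟩).2 (by decide)
    have h3 : γ (f ⟨0, by norm_num⟩) ≤ γ (f ⟨3, by norm_num⟩) :=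
      (hiff ⟨0, by norm_num⟩ ⟨3, by norm_num⟩).2 (by decide)
    have h4 : ¬ γ (f ⟨3, by norm_num⟩) ≤ γ (f ⟨0, by norm_num⟩) := fun h => by
      have := (hiff ⟨3, by norm_num⟩ ⟨0, by norm_num⟩).1 h; revert this; decide
    have h5 : γ (f ⟨3, by norm_num⟩) ≤ γ (f ⟨2, by norm_num⟩) :=
      (hiff ⟨3, by norm_num⟩ ⟨2, by norm_num⟩).2 (by decide)
    have h6 : ¬ γ (f ⟨2, by norm_num⟩) ≤ γ (f ⟨3, by norm_num⟩) := fun h => by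
      have := (hiff ⟨2, by norm_num⟩ ⟨3, by norm_num⟩).1 h; revert this; decide
    exact ⟨f ⟨0, by norm_num⟩, f ⟨1, by norm_num⟩, f ⟨2, by norm_num⟩, f ⟨3, by norm_num⟩,
      (hbd ⟨0, by norm_num⟩).1, hmono (by decide), hmono (by decide), hmono (by decide),
      (hbd ⟨3, by norm_num⟩).2, by omega, by omega, by omega⟩
  · rintro ⟨a, b, c, d, h1, h2, h3, h4, h5, h6, h7, h8⟩
    refine ⟨![a,b,c,d], ?_, ?_, ?_, ?_⟩
    · intro s t hst
      fin_cases s <;> fin_cases t <;> simp_all <;> omega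
    · intro s; fin_cases s <;> simp <;> omega
    · intro s t; fin_cases s <;> fin_cases t <;> simp [fv40,fv41,fv42,fv43] <;> omega
    · intro s t; fin_cases s <;> fin_cases t <;> simp [fv40,fv41,fv42,fv43,absnat] <;> omega

lemma c1032_s8 (n : ℕ) (γ : ℕ → ℕ) :
    Contains n γ [1,0,3,2] ↔ ∃ a b c d, 1 ≤ a ∧ a < b ∧ b < c ∧ c < d ∧ d ≤ n ∧
      γ b < γ a ∧ γ a < γ d ∧ γ d < γ c := by
  constructor
  · rintro ⟨f, hmono, hbd, hiff, -⟩
    have h1 : γ (f ⟨1, by norm_num⟩) ≤ γ (f ⟨0, by norm_num⟩) :=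
      (hiff ⟨1, by norm_num⟩ ⟨0, by norm_num⟩).2 (by decide)
    have h2 : ¬ γ (f ⟨0, by norm_num⟩) ≤ γ (f ⟨1, by norm_num⟩) := fun h => by
      have := (hiff ⟨0, by norm_num⟩ ⟨1, by norm_num⟩).1 h; revert this; decide
    have h3 : γ (f ⟨0, by norm_num⟩) ≤ γ (f ⟨3, by norm_num⟩) :=
      (hiff ⟨0, by norm_num⟩ ⟨3, by norm_num⟩).2 (by decide)
    have h4 : ¬ γ (f ⟨3, by norm_num⟩) ≤ γ (f ⟨0, by norm_num⟩) := fun h => by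
      have := (hiff ⟨3, by norm_num⟩ ⟨0, by norm_num⟩).1 h; revert this; decide
    have h5 : γ (f ⟨3, by norm_num⟩) ≤ γ (f ⟨2, by norm_num⟩) :=
      (hiff ⟨3, by norm_num⟩ ⟨2, by norm_num⟩).2 (by decide)
    have h6 : ¬ γ (f ⟨2, by norm_num⟩) ≤ γ (f ⟨3, by norm_num⟩) := fun h => by
      have := (hiff ⟨2, by norm_num⟩ ⟨3, by norm_num⟩).1 h; revert this; decide
    exact ⟨f ⟨0, by norm_num⟩, f ⟨1, by norm_num⟩, f ⟨2, by norm_num⟩, f ⟨3, by norm_num⟩,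
      (hbd ⟨0, by norm_num⟩).1, hmono (by decide), hmono (by decide), hmono (by decide),
      (hbd ⟨3, by norm_num⟩).2, by omega, by omega, by omega⟩
  · rintro ⟨a, b, c, d, h1, h2, h3, h4, h5, h6, h7, h8⟩
    refine ⟨![a,b,c,d], ?_, ?_, ?_, ?_⟩
    · intro s t hst
      fin_cases s <;> fin_cases t <;> simp_all <;> omega
    · intro s; fin_cases s <;> simp <;> omega
    · intro s t; fin_cases s <;> fin_cases t <;> simp [fv40,fv41,fv42,fv43] <;> omega
    · intro s t; fin_cases s <;> fin_cases t <;> simp [fv40,fv41,fv42,fv43,absnat] <;> omega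

lemma c1022_s8 (n : ℕ) (γ : ℕ → ℕ) :
    Contains n γ [1,0,2,2] ↔ ∃ a b c d, 1 ≤ a ∧ a < b ∧ b < c ∧ c < d ∧ d ≤ n ∧
      γ b < γ a ∧ γ a < γ c ∧ γ c = γ d := by
  constructor
  · rintro ⟨f, hmono, hbd, hiff, -⟩
    have h1 : γ (f ⟨1, by norm_num⟩) ≤ γ (f ⟨0, by norm_num⟩) :=
      (hiff ⟨1, by norm_num⟩ ⟨0, by norm_num⟩).2 (by decide)
    have h2 : ¬ γ (f ⟨0, by norm_num⟩) ≤ γ (f ⟨1, by norm_num⟩) := fun h => by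
      have := (hiff ⟨0, by norm_num⟩ ⟨1, by norm_num⟩).1 h; revert this; decide
    have h3 : γ (f ⟨0, by norm_num⟩) ≤ γ (f ⟨2, by norm_num⟩) :=
      (hiff ⟨0, by norm_num⟩ ⟨2, by norm_num⟩).2 (by decide)
    have h4 : ¬ γ (f ⟨2, by norm_num⟩) ≤ γ (f ⟨0, by norm_num⟩) := fun h => by
      have := (hiff ⟨2, by norm_num⟩ ⟨0, by norm_num⟩).1 h; revert this; decide
    have h5 : γ (f ⟨2, by norm_num⟩) ≤ γ (f ⟨3, by norm_num⟩) :=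
      (hiff ⟨2, by norm_num⟩ ⟨3, by norm_num⟩).2 (by decide)
    have h6 : γ (f ⟨3, by norm_num⟩) ≤ γ (f ⟨2, by norm_num⟩) :=
      (hiff ⟨3, by norm_num⟩ ⟨2, by norm_num⟩).2 (by decide)
    exact ⟨f ⟨0, by norm_num⟩, f ⟨1, by norm_num⟩, f ⟨2, by norm_num⟩, f ⟨3, by norm_num⟩,
      (hbd ⟨0, by norm_num⟩).1, hmono (by decide), hmono (by decide), hmono (by decide),
      (hbd ⟨3, by norm_num⟩).2, by omega, by omega, by omega⟩
  · rintro ⟨a, b, c, d, h1, h2, h3, h4, h5, h6, h7, h8⟩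
    refine ⟨![a,b,c,d], ?_, ?_, ?_, ?_⟩
    · intro s t hst
      fin_cases s <;> fin_cases t <;> simp_all <;> omega
    · intro s; fin_cases s <;> simp <;> omega
    · intro s t; fin_cases s <;> fin_cases t <;> simp [fv40,fv41,fv42,fv43] <;> omega
    · intro s t; fin_cases s <;> fin_cases t <;> simp [fv40,fv41,fv42,fv43,absnat] <;> omega

set_option maxHeartbeats 1600000 in
theorem stmt8 (n : ℕ) (α β : ℕ → ℕ) (hpos : ∀ i, 1 ≤ i → i ≤ n → 1 ≤ α i)
    (hav : AvoidsKM n α) (hswap : LeftSwapped n α β) :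
    AvoidsKM n β := by
  obtain ⟨i, j, hi1, hij, hjn, hlt, hbi, hbj, hoth⟩ := hswap
  have H1 : ∀ x y z, 1 ≤ x ∧ x < y ∧ y < z ∧ z ≤ n ∧ α x < α y ∧ α y < α z → False := by
    rintro x y z ⟨p1,p2,p3,p4,p5,p6⟩
    exact hav [0,1,2] (by simp) ((c012_s8 n α).2 ⟨x,y,z,p1,p2,p3,p4,p5,p6⟩)
  have H2 : ∀ x y z w, 1 ≤ x ∧ x < y ∧ y < z ∧ z < w ∧ w ≤ n ∧
      α x = α y ∧ α z = α w ∧ α x + 2 ≤ α z → False := by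
    rintro x y z w ⟨p1,p2,p3,p4,p5,p6,p7,p8⟩
    exact hav [0,0,2,2] (by simp) ((c0022_s8 n α).2 ⟨x,y,z,w,p1,p2,p3,p4,p5,p6,p7,p8⟩)
  have H3 : ∀ x y z w, 1 ≤ x ∧ x < y ∧ y < z ∧ z < w ∧ w ≤ n ∧
      α x = α y ∧ α x < α w ∧ α w < α z → False := by
    rintro x y z w ⟨p1,p2,p3,p4,p5,p6,p7,p8⟩
    exact hav [0,0,2,1] (by simp) ((c0021_s8 n α).2 ⟨x,y,z,w,p1,p2,p3,p4,p5,p6,p7,p8⟩)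
  have H4 : ∀ x y z w, 1 ≤ x ∧ x < y ∧ y < z ∧ z < w ∧ w ≤ n ∧
      α y < α x ∧ α x < α w ∧ α w < α z → False := by
    rintro x y z w ⟨p1,p2,p3,p4,p5,p6,p7,p8⟩
    exact hav [1,0,3,2] (by simp) ((c1032_s8 n α).2 ⟨x,y,z,w,p1,p2,p3,p4,p5,p6,p7,p8⟩)
  have H5 : ∀ x y z w, 1 ≤ x ∧ x < y ∧ y < z ∧ z < w ∧ w ≤ n ∧
      α y < α x ∧ α x < α z ∧ α z = α w → False := by
    rintro x y z w ⟨p1,p2,p3,p4,p5,p6,p7,p8⟩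
    exact hav [1,0,2,2] (by simp) ((c1022_s8 n α).2 ⟨x,y,z,w,p1,p2,p3,p4,p5,p6,p7,p8⟩)
  have key : ∀ t, (t = i ∧ β t = α j ∧ α t = α i) ∨ (t = j ∧ β t = α i ∧ α t = α j) ∨
      (t ≠ i ∧ t ≠ j ∧ β t = α t) := by
    intro t
    rcases eq_or_ne t i with h|h
    · exact .inl ⟨h, by rw [h]; exact hbi, by rw [h]⟩
    rcases eq_or_ne t j with h2|h2
    · exact .inr (.inl ⟨h2, by rw [h2]; exact hbj, by rw [h2]⟩)
    · exact .inr (.inr ⟨h, h2, hoth t h h2⟩)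
  intro p hp
  fin_cases hp
  · rw [c012_s8]
    rintro ⟨a, b, c, q1, q2, q3, q4, q5, q6⟩
    rcases key a with ⟨ea,va,wa⟩|⟨ea,va,wa⟩|⟨ea,ea',va⟩ <;>
    rcases key b with ⟨eb,vb,wb⟩|⟨eb,vb,wb⟩|⟨eb,eb',vb⟩ <;>
    rcases key c with ⟨ec,vc,wc⟩|⟨ec,vc,wc⟩|⟨ec,ec',vc⟩ <;>
    first
      | omega
      | exact H1 a b c (by omega)
      | exact H1 a j c (by omega)
      | exact H3 a b c j (by omega)
      | exact H4 a b c j (by omega)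
      | exact H1 i b c (by omega)
      | exact H1 a i c (by omega)
      | exact H4 i a b c (by omega)
      | exact H5 i a b c (by omega)
      | exact H1 a b j (by omega)
      | (rcases Nat.lt_trichotomy (α i) (α a) with h'1|h'1|h'1 <;>
         rcases Nat.lt_trichotomy (α i) (α b) with h'2|h'2|h'2 <;>
         rcases Nat.lt_trichotomy (α j) (α c) with h'3|h'3|h'3 <;>
          first
            | omega
            | exact H1 a b c (by omega)
            | exact H1 a j c (by omega)
            | exact H3 a b c j (by omega)
            | exact H4 a b c j (by omega)
            | exact H1 i b c (by omega)
            | exact H1 a i c (by omega)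
            | exact H4 i a b c (by omega)
            | exact H5 i a b c (by omega)
            | exact H1 a b j (by omega)
          )
      | (rcases Nat.lt_trichotomy j c with h|h|h <;>
         rcases Nat.lt_trichotomy (α i) (α a) with h2|h2|h2 <;>
          first
            | omega
            | exact H1 a j c (by omega)
            | exact H1 a b c (by omega)
            | exact H3 a b c j (by omega)
            | exact H4 a b c j (by omega))
      | (rcases Nat.lt_trichotomy i a with h|h|h <;>
         rcases Nat.lt_trichotomy (α j) (α c) with h2|h2|h2 <;>
          first
            | omega
            | exact H1 a i c (by omega)
            | exact H1 a b c (by omega)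
            | exact H5 i a b c (by omega)
            | exact H4 i a b c (by omega))
  · rw [c0022_s8]
    rintro ⟨a, b, c, d, q1, q2, q3, q4, q5, q6, q7, q8⟩
    rcases key a with ⟨ea,va,wa⟩|⟨ea,va,wa⟩|⟨ea,ea',va⟩ <;>
    rcases key b with ⟨eb,vb,wb⟩|⟨eb,vb,wb⟩|⟨eb,eb',vb⟩ <;>
    rcases key c with ⟨ec,vc,wc⟩|⟨ec,vc,wc⟩|⟨ec,ec',vc⟩ <;>
    rcases key d with ⟨ed,vd,wd⟩|⟨ed,vd,wd⟩|⟨ed,ed',vd⟩ <;>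
    first
      | omega
      | exact H2 a b c d (by omega)
      | exact H1 a b c (by omega)
      | exact H5 a b c d (by omega)
      | exact H2 a b j d (by omega)
      | exact H2 a b d j (by omega)
      | exact H2 a b c j (by omega)
      | exact H2 i b c d (by omega)
      | exact H2 i a c d (by omega)
      | exact H2 a i c d (by omega)
      | exact H2 a b i d (by omega)
      | exact H1 a i c (by omega)
      | exact H3 a b c d (by omega)
      | exact H1 a c d (by omega)
      | (rcases Nat.lt_trichotomy (α i) (α a) with h'1|h'1|h'1 <;>
         rcases Nat.lt_trichotomy (α i) (α b) with h'2|h'2|h'2 <;>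
         rcases Nat.lt_trichotomy (α j) (α c) with h'3|h'3|h'3 <;>
          first
            | omega
            | exact H2 a b c d (by omega)
            | exact H1 a b c (by omega)
            | exact H5 a b c d (by omega)
            | exact H2 a b j d (by omega)
            | exact H2 a b d j (by omega)
            | exact H2 a b c j (by omega)
            | exact H2 i b c d (by omega)
            | exact H2 i a c d (by omega)
            | exact H2 a i c d (by omega)
            | exact H2 a b i d (by omega)
            | exact H1 a i c (by omega)
            | exact H3 a b c d (by omega)
            | exact H1 a c d (by omega)
          )
      | (rcases Nat.lt_trichotomy i a with h|h|h <;>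
          first
            | omega
            | exact H2 a i c d (by omega)
            | exact H2 i a c d (by omega))
      | (rcases Nat.lt_trichotomy j d with h|h|h <;>
          first
            | omega
            | exact H2 a b j d (by omega)
            | exact H2 a b d j (by omega))
  · rw [c0021_s8]
    rintro ⟨a, b, c, d, q1, q2, q3, q4, q5, q6, q7, q8⟩
    rcases key a with ⟨ea,va,wa⟩|⟨ea,va,wa⟩|⟨ea,ea',va⟩ <;>
    rcases key b with ⟨eb,vb,wb⟩|⟨eb,vb,wb⟩|⟨eb,eb',vb⟩ <;>
    rcases key c with ⟨ec,vc,wc⟩|⟨ec,vc,wc⟩|⟨ec,ec',vc⟩ <;>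
    rcases key d with ⟨ed,vd,wd⟩|⟨ed,vd,wd⟩|⟨ed,ed',vd⟩ <;>
    first
      | omega
      | exact H3 a b c d (by omega)
      | exact H1 a b c (by omega)
      | exact H4 a b c d (by omega)
      | exact H3 a b j d (by omega)
      | exact H1 b d j (by omega)
      | exact H3 a b c j (by omega)
      | exact H3 i b c d (by omega)
      | exact H3 i a c d (by omega)
      | exact H3 a i c d (by omega)
      | exact H3 a b i d (by omega)
      | exact H1 a i c (by omega)
      | exact H3 a b c i (by omega)
      | exact H1 b i c (by omega)
      | exact H2 a b c d (by omega)
      | exact H1 a c d (by omega)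
      | (rcases Nat.lt_trichotomy (α i) (α a) with h'1|h'1|h'1 <;>
         rcases Nat.lt_trichotomy (α i) (α b) with h'2|h'2|h'2 <;>
         rcases Nat.lt_trichotomy (α j) (α c) with h'3|h'3|h'3 <;>
          first
            | omega
            | exact H3 a b c d (by omega)
            | exact H1 a b c (by omega)
            | exact H4 a b c d (by omega)
            | exact H3 a b j d (by omega)
            | exact H1 b d j (by omega)
            | exact H3 a b c j (by omega)
            | exact H3 i b c d (by omega)
            | exact H3 i a c d (by omega)
            | exact H3 a i c d (by omega)
            | exact H3 a b i d (by omega)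
            | exact H1 a i c (by omega)
            | exact H3 a b c i (by omega)
            | exact H1 b i c (by omega)
            | exact H2 a b c d (by omega)
            | exact H1 a c d (by omega)
          )
      | (rcases Nat.lt_trichotomy i a with h|h|h <;>
          first
            | omega
            | exact H3 a i c d (by omega)
            | exact H3 i a c d (by omega))
      | (rcases Nat.lt_trichotomy j d with h|h|h <;>
          first
            | omega
            | exact H3 a b j d (by omega)
            | exact H1 b d j (by omega))
  · rw [c1032_s8]
    rintro ⟨a, b, c, d, q1, q2, q3, q4, q5, q6, q7, q8⟩
    rcases key a with ⟨ea,va,wa⟩|⟨ea,va,wa⟩|⟨ea,ea',va⟩ <;>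
    rcases key b with ⟨eb,vb,wb⟩|⟨eb,vb,wb⟩|⟨eb,eb',vb⟩ <;>
    rcases key c with ⟨ec,vc,wc⟩|⟨ec,vc,wc⟩|⟨ec,ec',vc⟩ <;>
    rcases key d with ⟨ed,vd,wd⟩|⟨ed,vd,wd⟩|⟨ed,ed',vd⟩ <;>
    first
      | omega
      | exact H4 a b c d (by omega)
      | exact H1 a b c (by omega)
      | exact H3 a b c d (by omega)
      | exact H4 a b j d (by omega)
      | exact H1 b d j (by omega)
      | exact H4 a b c j (by omega)
      | exact H4 i b c d (by omega)
      | exact H4 a i c d (by omega)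
      | exact H1 i a c (by omega)
      | exact H4 a b i d (by omega)
      | exact H1 a i c (by omega)
      | exact H4 a b c i (by omega)
      | exact H1 b c d (by omega)
      | exact H5 a b c d (by omega)
      | (rcases Nat.lt_trichotomy (α i) (α a) with h'1|h'1|h'1 <;>
         rcases Nat.lt_trichotomy (α i) (α b) with h'2|h'2|h'2 <;>
         rcases Nat.lt_trichotomy (α j) (α c) with h'3|h'3|h'3 <;>
          first
            | omega
            | exact H4 a b c d (by omega)
            | exact H1 a b c (by omega)
            | exact H3 a b c d (by omega)
            | exact H4 a b j d (by omega)
            | exact H1 b d j (by omega)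
            | exact H4 a b c j (by omega)
            | exact H4 i b c d (by omega)
            | exact H4 a i c d (by omega)
            | exact H1 i a c (by omega)
            | exact H4 a b i d (by omega)
            | exact H1 a i c (by omega)
            | exact H4 a b c i (by omega)
            | exact H1 b c d (by omega)
            | exact H5 a b c d (by omega)
          )
      | (rcases Nat.lt_trichotomy i a with h|h|h <;>
          first
            | omega
            | exact H4 a i c d (by omega)
            | exact H1 i a c (by omega))
      | (rcases Nat.lt_trichotomy j d with h|h|h <;>
          first
            | omega
            | exact H4 a b j d (by omega)
            | exact H1 b d j (by omega))
  · rw [c1022_s8]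
    rintro ⟨a, b, c, d, q1, q2, q3, q4, q5, q6, q7, q8⟩
    rcases key a with ⟨ea,va,wa⟩|⟨ea,va,wa⟩|⟨ea,ea',va⟩ <;>
    rcases key b with ⟨eb,vb,wb⟩|⟨eb,vb,wb⟩|⟨eb,eb',vb⟩ <;>
    rcases key c with ⟨ec,vc,wc⟩|⟨ec,vc,wc⟩|⟨ec,ec',vc⟩ <;>
    rcases key d with ⟨ed,vd,wd⟩|⟨ed,vd,wd⟩|⟨ed,ed',vd⟩ <;>
    first
      | omega
      | exact H5 a b c d (by omega)
      | exact H1 a b c (by omega)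
      | exact H2 a b c d (by omega)
      | exact H5 a b j d (by omega)
      | exact H5 a b d j (by omega)
      | exact H5 a b c j (by omega)
      | exact H5 i b c d (by omega)
      | exact H5 a i c d (by omega)
      | exact H1 i a c (by omega)
      | exact H5 a b i d (by omega)
      | exact H1 a i c (by omega)
      | exact H4 a b c d (by omega)
      | exact H5 a b c i (by omega)
      | exact H1 b c d (by omega)
      | (rcases Nat.lt_trichotomy (α i) (α a) with h'1|h'1|h'1 <;>
         rcases Nat.lt_trichotomy (α i) (α b) with h'2|h'2|h'2 <;>
         rcases Nat.lt_trichotomy (α j) (α c) with h'3|h'3|h'3 <;>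
          first
            | omega
            | exact H5 a b c d (by omega)
            | exact H1 a b c (by omega)
            | exact H2 a b c d (by omega)
            | exact H5 a b j d (by omega)
            | exact H5 a b d j (by omega)
            | exact H5 a b c j (by omega)
            | exact H5 i b c d (by omega)
            | exact H5 a i c d (by omega)
            | exact H1 i a c (by omega)
            | exact H5 a b i d (by omega)
            | exact H1 a i c (by omega)
            | exact H4 a b c d (by omega)
            | exact H5 a b c i (by omega)
            | exact H1 b c d (by omega)
          )
      | (rcases Nat.lt_trichotomy i a with h|h|h <;>
          first
            | omega
            | exact H5 a i c d (by omega)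
            | exact H1 i a c (by omega))
      | (rcases Nat.lt_trichotomy j d with h|h|h <;>
          first
            | omega
            | exact H5 a b j d (by omega)
            | exact H5 a b d j (by omega))
end

section
/- Let α be a weak composition with all parts ≥ 1 avoiding all patterns in KM, let T be a quasi-key tableau of shape α with weight μ, and let 1 ≤ b ≤ n. Then μ_1 + ... + μ_b ≤ α_1 + ... + α_b + flex_b(α). -/
open Finset

/-- The boxes of the skyline diagram `D(α)` as a finite set. -/
def Boxes (n : ℕ) (α : ℕ → ℕ) : Finset (ℕ × ℕ) :=
  (Finset.Icc 1 n).biUnion (fun i => (Finset.Icc 1 (α i)).image (fun j => (i, j)))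

/-- The number of entries of the filling `T` equal to `v`. -/
def wtOf (n : ℕ) (α : ℕ → ℕ) (T : ℕ → ℕ → ℕ) (v : ℕ) : ℕ :=
  ((Boxes n α).filter (fun x => T x.1 x.2 = v)).card

/-- The start `i_{m-1}` of the segment of `α` containing `b`. -/
noncomputable def segStart (α : ℕ → ℕ) (b : ℕ) : ℕ :=
  sSup {t | 1 ≤ t ∧ t ≤ b ∧ (t = 1 ∨ α (t - 1) < α t)}

/-- The end `i_m` for the segment of `α` containing `b` (with `i_{k+1} = n + 1`). -/
noncomputable def segEnd (n : ℕ) (α : ℕ → ℕ) (b : ℕ) : ℕ :=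
  sInf {t | b < t ∧ ((t ≤ n ∧ α (t - 1) < α t) ∨ t = n + 1)}

/-- `rmin_b(α)`. -/
noncomputable def rminC (α : ℕ → ℕ) (b : ℕ) : ℕ :=
  if segStart α b = 1 ∨ α b ≤ α (segStart α b - 1) then b else segStart α b - 1

/-- `rmax_b(α)`. -/
noncomputable def rmaxC (n : ℕ) (α : ℕ → ℕ) (b : ℕ) : ℕ :=
  if Aev n α (segEnd n α b) ≤ Aev n α (b + 1) then b + 1 else segEnd n α b

/-- `flex_b(α)` (truncated subtraction encodes the `else 0` clause). -/
noncomputable def flexC (n : ℕ) (α : ℕ → ℕ) (b : ℕ) : ℕ :=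
  Aev n α (rmaxC n α b) - Aev n α (rminC α b) - 1

section Auxiliary

lemma c012_s10 {n p q r : ℕ} {α : ℕ → ℕ} (h1p : 1 ≤ p) (hpq : p < q) (hqr : q < r) (hrn : r ≤ n)
    (h1 : α p < α q) (h2 : α q < α r) : Contains n α [0,1,2] := by
  refine ⟨![p,q,r], ?_, ?_, ?_, ?_⟩
  · rw [Fin.strictMono_iff_lt_succ]
    intro i; fin_cases i <;> simp [hpq, hqr]
  · intro s; fin_cases s <;> simp <;> omega
  · intro s t; fin_cases s <;> fin_cases t <;> simp [List.get] <;> omega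
  · intro s t; fin_cases s <;> fin_cases t <;> simp [List.get, le_abs] <;> omega

lemma c0022_s10 {n p q r s : ℕ} {α : ℕ → ℕ} (h1p : 1 ≤ p) (hpq : p < q) (hqr : q < r)
    (hrs : r < s) (hsn : s ≤ n)
    (h1 : α p = α q) (h2 : α r = α s) (h3 : α p + 2 ≤ α r) : Contains n α [0,0,2,2] := by
  refine ⟨![p,q,r,s], ?_, ?_, ?_, ?_⟩
  · rw [Fin.strictMono_iff_lt_succ]
    intro i; fin_cases i <;> first | exact hpq | exact hqr | exact hrs
  · intro t; fin_cases t <;> simp <;> omega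
  · intro u t; fin_cases u <;> fin_cases t <;> simp [List.get] <;> omega
  · intro u t; fin_cases u <;> fin_cases t <;> simp [List.get, le_abs] <;> omega

lemma c0021_s10 {n p q r s : ℕ} {α : ℕ → ℕ} (h1p : 1 ≤ p) (hpq : p < q) (hqr : q < r)
    (hrs : r < s) (hsn : s ≤ n)
    (h1 : α p = α q) (h2 : α q < α s) (h3 : α s < α r) : Contains n α [0,0,2,1] := by
  refine ⟨![p,q,r,s], ?_, ?_, ?_, ?_⟩
  · rw [Fin.strictMono_iff_lt_succ]
    intro i; fin_cases i <;> first | exact hpq | exact hqr | exact hrs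
  · intro t; fin_cases t <;> simp <;> omega
  · intro u t; fin_cases u <;> fin_cases t <;> simp [List.get] <;> omega
  · intro u t; fin_cases u <;> fin_cases t <;> simp [List.get, le_abs] <;> omega

lemma c1032_s10 {n p q r s : ℕ} {α : ℕ → ℕ} (h1p : 1 ≤ p) (hpq : p < q) (hqr : q < r)
    (hrs : r < s) (hsn : s ≤ n)
    (h1 : α q < α p) (h2 : α p < α s) (h3 : α s < α r) : Contains n α [1,0,3,2] := by
  refine ⟨![p,q,r,s], ?_, ?_, ?_, ?_⟩
  · rw [Fin.strictMono_iff_lt_succ]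
    intro i; fin_cases i <;> first | exact hpq | exact hqr | exact hrs
  · intro t; fin_cases t <;> simp <;> omega
  · intro u t; fin_cases u <;> fin_cases t <;> simp [List.get] <;> omega
  · intro u t; fin_cases u <;> fin_cases t <;> simp [List.get, le_abs] <;> omega

lemma c1022_s10 {n p q r s : ℕ} {α : ℕ → ℕ} (h1p : 1 ≤ p) (hpq : p < q) (hqr : q < r)
    (hrs : r < s) (hsn : s ≤ n)
    (h1 : α q < α p) (h2 : α p < α r) (h3 : α r = α s) : Contains n α [1,0,2,2] := by
  refine ⟨![p,q,r,s], ?_, ?_, ?_, ?_⟩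
  · rw [Fin.strictMono_iff_lt_succ]
    intro i; fin_cases i <;> first | exact hpq | exact hqr | exact hrs
  · intro t; fin_cases t <;> simp <;> omega
  · intro u t; fin_cases u <;> fin_cases t <;> simp [List.get] <;> omega
  · intro u t; fin_cases u <;> fin_cases t <;> simp [List.get, le_abs] <;> omega

lemma patPair {n b j r₁ r₂ i i' : ℕ} {α : ℕ → ℕ} (hav : AvoidsKM n α)
    (h1 : 1 ≤ r₁) (h12 : r₁ < r₂) (h2b : r₂ ≤ b) (hbi : b < i) (hii : i < i') (hin : i' ≤ n)
    (ha1 : α r₁ < j) (ha2 : α r₂ < j) (hc : j ≤ α i) (hc' : j ≤ α i') :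
    α r₁ = j - 1 ∧ α r₂ = j - 1 := by
  have hri : r₂ < i := lt_of_le_of_lt h2b hbi
  have hinn : i ≤ n := le_of_lt (lt_of_lt_of_le hii hin)
  rcases lt_trichotomy (α i) (α i') with h | h | h
  · exact absurd (c012_s10 (le_trans h1 (le_of_lt h12)) hri hii hin (by omega) h)
      (hav [0,1,2] (by simp))
  · rcases lt_trichotomy (α r₁) (α r₂) with h' | h' | h'
    · exact absurd (c012_s10 h1 h12 hri hinn h' (by omega)) (hav [0,1,2] (by simp))
    · by_cases hgap : α r₁ + 2 ≤ α i
      · exact absurd (c0022_s10 h1 h12 hri hii hin h' h hgap) (hav [0,0,2,2] (by simp))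
      · omega
    · exact absurd (c1022_s10 h1 h12 hri hii hin h' (by omega) h) (hav [1,0,2,2] (by simp))
  · rcases lt_trichotomy (α r₁) (α r₂) with h' | h' | h'
    · exact absurd (c012_s10 h1 h12 (lt_of_lt_of_le (lt_of_le_of_lt h2b hbi) (le_of_lt hii)) hin h'
        (by omega)) (hav [0,1,2] (by simp))
    · exact absurd (c0021_s10 h1 h12 hri hii hin h' (by omega) h) (hav [0,0,2,1] (by simp))
    · exact absurd (c1032_s10 h1 h12 hri hii hin h' (by omega) h) (hav [1,0,3,2] (by simp))

lemma mem_Boxes {n : ℕ} {α : ℕ → ℕ} {x : ℕ × ℕ} : x ∈ Boxes n α ↔ InD n α x.1 x.2 := by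
  simp only [Boxes, InD, Finset.mem_biUnion, Finset.mem_image, Finset.mem_Icc]
  constructor
  · rintro ⟨i, hi, j, hj, rfl⟩
    exact ⟨hi.1, hi.2, hj.1, hj.2⟩
  · rintro ⟨h1, h2, h3, h4⟩
    exact ⟨x.1, ⟨h1, h2⟩, x.2, ⟨h3, h4⟩, rfl⟩

lemma colId {n : ℕ} {α : ℕ → ℕ} {T : ℕ → ℕ → ℕ} (hT : IsQKT n α T) (c r₀ b₀ : ℕ)
    (hc : 1 ≤ c) (hb₀ : b₀ ≤ n)
    (h : ∀ r, r₀ < r → r ≤ b₀ → c ≤ α r ∧ r₀ < T r c) :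
    ∀ r, r₀ < r → r ≤ b₀ → T r c = r := by
  intro r
  induction r using Nat.strong_induction_on with
  | _ r IH =>
    intro h1 h2
    have hbox : InD n α r c := ⟨by omega, by omega, hc, (h r h1 h2).1⟩
    have hub := hT.rowBound r c hbox
    have hlb := (h r h1 h2).2
    rcases eq_or_lt_of_le hub with he | hlt
    · exact he
    · exfalso
      have hs : T (T r c) c = T r c := IH (T r c) hlt hlb (by omega)
      have hboxs : InD n α (T r c) c := ⟨by omega, by omega, hc, (h (T r c) hlb (by omega)).1⟩
      exact hT.colDistinct (T r c) r c hboxs hbox (by omega) hs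

lemma noExtra {n b : ℕ} {α : ℕ → ℕ} {T : ℕ → ℕ → ℕ} (hT : IsQKT n α T)
    (hpos : ∀ i, 1 ≤ i → i ≤ n → 1 ≤ α i)
    (hb1 : 1 ≤ b) (hbn : b ≤ n) {j : ℕ} (hj : 1 ≤ j)
    (hcol : ∀ r, 1 ≤ r → r ≤ b → j ≤ α r + 1) :
    ∀ i, b < i → i ≤ n → j ≤ α i → b < T i j := by
  classical
  intro i hbi hin hij
  by_contra hle
  push_neg at hle
  by_cases hall : ∀ r, 1 ≤ r → r ≤ b → j ≤ α r
  · have hid := colId hT j 0 b hj hbn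
      (fun r h1 h2 => ⟨hall r h1 h2, hT.pos r j ⟨h1, by omega, hj, hall r h1 h2⟩⟩)
    have hs1 : 1 ≤ T i j := hT.pos i j ⟨by omega, hin, hj, hij⟩
    have heq : T (T i j) j = T i j := hid (T i j) (by omega) hle
    exact hT.colDistinct (T i j) i j ⟨hs1, by omega, hj, hall (T i j) hs1 hle⟩
      ⟨by omega, hin, hj, hij⟩ (by omega) heq
  · push_neg at hall
    obtain ⟨r₀, hr01, hr0b, hr0⟩ := hall
    have hj2 : 2 ≤ j := by have := hpos r₀ hr01 (by omega); omega
    set rs := Nat.findGreatest (fun r => α r < j) b with hrsdef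
    have hPrs : α rs < j := Nat.findGreatest_spec (P := fun r => α r < j) hr0b hr0
    have hrs1 : r₀ ≤ rs := Nat.le_findGreatest (P := fun r => α r < j) hr0b hr0
    have hrsb : rs ≤ b := Nat.findGreatest_le b
    have hrsval : α rs = j - 1 := by have := hcol rs (by omega) hrsb; omega
    have hmax : ∀ t, rs < t → t ≤ b → j ≤ α t := by
      intro t h1t h2t
      by_contra hlt; push_neg at hlt
      exact Nat.findGreatest_is_greatest h1t h2t hlt
    have hid1 : ∀ r, 0 < r → r ≤ b → T r (j-1) = r := by
      apply colId hT (j-1) 0 b (by omega) hbn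
      intro r h1 h2
      have hge : j - 1 ≤ α r := by have := hcol r h1 h2; omega
      exact ⟨hge, hT.pos r (j-1) ⟨h1, by omega, by omega, hge⟩⟩
    have hrstar : T rs (j-1) = rs := hid1 rs (by omega) hrsb
    have hkey : ∀ s, rs < s → s ≤ n → j ≤ α s → rs < T s j := by
      intro s h1s h2s h3s
      have hc1 : j - 1 + 1 = j := by omega
      have h4 := hT.qkt4 rs s (j-1) h1s (by omega)
        ⟨by omega, by omega, by omega, by omega⟩
        (by rw [hc1]; exact ⟨by omega, h2s, hj, h3s⟩)
      rw [hc1] at h4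
      omega
    have hid2 : ∀ r, rs < r → r ≤ b → T r j = r := by
      apply colId hT j rs b hj hbn
      intro r h1 h2
      exact ⟨hmax r h1 h2, hkey r h1 (by omega) (hmax r h1 h2)⟩
    have hky := hkey i (by omega) hin hij
    have heq : T (T i j) j = T i j := hid2 (T i j) (by omega) hle
    exact hT.colDistinct (T i j) i j
      ⟨by omega, by omega, hj, hmax (T i j) (by omega) hle⟩
      ⟨by omega, hin, hj, hij⟩ (by omega) heq

lemma segStart_spec {α : ℕ → ℕ} {b : ℕ} (hb1 : 1 ≤ b) :
    1 ≤ segStart α b ∧ segStart α b ≤ b ∧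
      (segStart α b = 1 ∨ α (segStart α b - 1) < α (segStart α b)) := by
  have h := Nat.sSup_mem (s := {t | 1 ≤ t ∧ t ≤ b ∧ (t = 1 ∨ α (t - 1) < α t)})
    ⟨1, ⟨le_refl 1, hb1, Or.inl rfl⟩⟩ ⟨b, fun t ht => ht.2.1⟩
  exact h

lemma segStart_noAsc {α : ℕ → ℕ} {b : ℕ} (hb1 : 1 ≤ b) :
    ∀ t, segStart α b < t → t ≤ b → α t ≤ α (t - 1) := by
  intro t h1 h2
  by_contra h; push_neg at h
  have h0 := (segStart_spec (α := α) hb1).1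
  have ht : t ∈ {t | 1 ≤ t ∧ t ≤ b ∧ (t = 1 ∨ α (t - 1) < α t)} := ⟨by omega, h2, Or.inr h⟩
  have := le_csSup (s := {t | 1 ≤ t ∧ t ≤ b ∧ (t = 1 ∨ α (t - 1) < α t)})
    ⟨b, fun u hu => hu.2.1⟩ ht
  have : t ≤ segStart α b := this
  omega

lemma seg_decr {α : ℕ → ℕ} {b : ℕ} (hb1 : 1 ≤ b) :
    ∀ r s, segStart α b ≤ r → r ≤ s → s ≤ b → α s ≤ α r := by
  intro r s h1 h2 h3
  induction s, h2 using Nat.le_induction with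
  | base => exact le_refl _
  | succ s hs IH =>
    have h4 : α (s+1) ≤ α s := by
      have := segStart_noAsc (α := α) hb1 (s+1) (by omega) h3
      simpa using this
    exact le_trans h4 (IH (by omega))

lemma vmin {n b : ℕ} {α : ℕ → ℕ} (hav : AvoidsKM n α) (hb1 : 1 ≤ b) (hbn : b ≤ n) :
    ∀ r, 1 ≤ r → r ≤ b → Aev n α (rminC α b) ≤ α r := by
  obtain ⟨hi1, hib, hiasc⟩ := segStart_spec (α := α) hb1
  have hpre : ∀ r, 1 ≤ r → r < segStart α b → α (segStart α b - 1) ≤ α r := by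
    intro r h1 h2
    by_contra h; push_neg at h
    have hasc : α (segStart α b - 1) < α (segStart α b) := by
      rcases hiasc with h' | h'
      · omega
      · exact h'
    rcases eq_or_lt_of_le (show r ≤ segStart α b - 1 by omega) with he | hlt
    · rw [he] at h; omega
    · exact absurd (c012_s10 h1 hlt (by omega) (by omega) h hasc) (hav [0,1,2] (by simp))
  by_cases hcase : segStart α b = 1 ∨ α b ≤ α (segStart α b - 1)
  · intro r h1 h2
    have hrm : rminC α b = b := by rw [rminC, if_pos hcase]
    rw [hrm, Aev, if_pos hbn]
    rcases le_or_gt (segStart α b) r with h' | h'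
    · exact seg_decr hb1 r b h' h2 (le_refl b)
    · have h2' : segStart α b ≠ 1 := by omega
      rcases hcase with hc | hc
      · exact absurd hc h2'
      · exact le_trans hc (hpre r h1 h')
  · intro r h1 h2
    have hrm : rminC α b = segStart α b - 1 := by rw [rminC, if_neg hcase]
    push_neg at hcase
    obtain ⟨hne1, hlt⟩ := hcase
    rw [hrm, Aev, if_pos (by omega)]
    rcases le_or_gt (segStart α b) r with h' | h'
    · exact le_trans (le_of_lt hlt) (seg_decr hb1 r b h' h2 (le_refl b))
    · exact hpre r h1 h'

lemma segEnd_spec {n b : ℕ} {α : ℕ → ℕ} (hbn : b ≤ n) :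
    b < segEnd n α b ∧ segEnd n α b ≤ n + 1 ∧
      (segEnd n α b = n + 1 ∨ (segEnd n α b ≤ n ∧ α (segEnd n α b - 1) < α (segEnd n α b))) := by
  have hmem := Nat.sInf_mem (s := {t | b < t ∧ ((t ≤ n ∧ α (t - 1) < α t) ∨ t = n + 1)})
    ⟨n+1, ⟨by omega, Or.inr rfl⟩⟩
  have hle : segEnd n α b ≤ n + 1 :=
    Nat.sInf_le (⟨by omega, Or.inr rfl⟩ : n + 1 ∈ {t | b < t ∧ ((t ≤ n ∧ α (t - 1) < α t) ∨ t = n + 1)})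
  refine ⟨hmem.1, hle, ?_⟩
  rcases hmem.2 with h | h
  · exact Or.inr ⟨h.1, h.2⟩
  · exact Or.inl h

lemma segEnd_noAsc {n b : ℕ} {α : ℕ → ℕ} (hbn : b ≤ n) :
    ∀ t, b < t → t < segEnd n α b → α t ≤ α (t - 1) := by
  intro t h1 h2
  by_contra h; push_neg at h
  have hsp := segEnd_spec (α := α) hbn
  have ht : t ∈ {t | b < t ∧ ((t ≤ n ∧ α (t - 1) < α t) ∨ t = n + 1)} :=
    ⟨h1, Or.inl ⟨by omega, h⟩⟩
  have := Nat.sInf_le ht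
  have : segEnd n α b ≤ t := this
  omega

lemma seg_decr2 {n b : ℕ} {α : ℕ → ℕ} (hbn : b ≤ n) :
    ∀ t, b + 1 ≤ t → t < segEnd n α b → α t ≤ α (b + 1) := by
  intro t h1 h2
  induction t, h1 using Nat.le_induction with
  | base => exact le_refl _
  | succ t ht IH =>
    have h3 : α (t+1) ≤ α t := by
      have := segEnd_noAsc (α := α) hbn (t+1) (by omega) h2
      simpa using this
    exact le_trans h3 (IH (by omega))

lemma rmax_ub {n b : ℕ} {α : ℕ → ℕ} (hav : AvoidsKM n α) (hb1 : 1 ≤ b) (hbn : b ≤ n) :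
    ∀ i, b < i → i ≤ n → α i ≤ Aev n α (rmaxC n α b) := by
  obtain ⟨he1, he2, he3⟩ := segEnd_spec (α := α) (b := b) hbn
  have hVmax : Aev n α (b+1) ≤ Aev n α (rmaxC n α b) ∧
      Aev n α (segEnd n α b) ≤ Aev n α (rmaxC n α b) := by
    by_cases h : Aev n α (segEnd n α b) ≤ Aev n α (b + 1)
    · rw [rmaxC, if_pos h]; exact ⟨le_refl _, h⟩
    · rw [rmaxC, if_neg h]; push_neg at h; exact ⟨le_of_lt h, le_refl _⟩
  intro i h1 h2
  rcases lt_trichotomy i (segEnd n α b) with h | h | h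
  · have hle : α i ≤ α (b+1) := by
      rcases eq_or_lt_of_le (show b + 1 ≤ i by omega) with he | hlt
      · rw [← he]
      · exact seg_decr2 hbn i (by omega) h
    have hA : Aev n α (b+1) = α (b+1) := by rw [Aev, if_pos (by omega)]
    rw [← hA] at hle
    exact le_trans hle hVmax.1
  · have hA : Aev n α (segEnd n α b) = α (segEnd n α b) := by rw [Aev, if_pos (by omega)]
    rw [h, ← hA]
    exact hVmax.2
  · rcases he3 with h' | ⟨hen, hasc⟩
    · omega
    · have hle : α i ≤ α (segEnd n α b) := by
        by_contra hgt; push_neg at hgt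
        exact absurd (c012_s10 (show 1 ≤ segEnd n α b - 1 by omega)
          (show segEnd n α b - 1 < segEnd n α b by omega) h h2 hasc hgt)
          (hav [0,1,2] (by simp))
      have hA : Aev n α (segEnd n α b) = α (segEnd n α b) := by rw [Aev, if_pos hen]
      rw [← hA] at hle
      exact le_trans hle hVmax.2

lemma noTwo {n b : ℕ} {α : ℕ → ℕ} {T : ℕ → ℕ → ℕ} (hav : AvoidsKM n α) (hT : IsQKT n α T)
    (hpos : ∀ i, 1 ≤ i → i ≤ n → 1 ≤ α i) (hb1 : 1 ≤ b) (hbn : b ≤ n)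
    {j i i' : ℕ} (hbi : b < i) (hii : i < i') (hin : i' ≤ n)
    (hj : 1 ≤ j) (hji : j ≤ α i) (hji' : j ≤ α i')
    (hT1 : T i j ≤ b) (hT2 : T i' j ≤ b) : False := by
  classical
  set P := (Finset.Icc 1 b).filter (fun r => j ≤ α r) with hP
  have hi'P : i' ∉ P := by
    simp only [hP, Finset.mem_filter, Finset.mem_Icc]
    rintro ⟨⟨_, h⟩, _⟩; omega
  have hiP : i ∉ insert i' P := by
    simp only [Finset.mem_insert, hP, Finset.mem_filter, Finset.mem_Icc]
    rintro (h | ⟨⟨_, h⟩, _⟩) <;> omega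
  set Q := insert i (insert i' P) with hQ
  have hQcard : Q.card = P.card + 2 := by
    rw [hQ, Finset.card_insert_of_notMem hiP, Finset.card_insert_of_notMem hi'P]
  have hQmem : ∀ r ∈ Q, 1 ≤ r ∧ r ≤ n ∧ j ≤ α r ∧ T r j ≤ b := by
    intro r hr
    simp only [hQ, Finset.mem_insert, hP, Finset.mem_filter, Finset.mem_Icc] at hr
    rcases hr with rfl | rfl | ⟨⟨ha, hb'⟩, hc⟩
    · exact ⟨by omega, by omega, hji, hT1⟩
    · exact ⟨by omega, hin, hji', hT2⟩
    · exact ⟨ha, by omega, hc, le_trans (hT.rowBound r j ⟨ha, by omega, hj, hc⟩) hb'⟩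
  have hinj : Set.InjOn (fun r => T r j) Q := by
    intro x hx y hy hxy
    by_contra hne
    obtain ⟨hx1, hx2, hx3, _⟩ := hQmem x hx
    obtain ⟨hy1, hy2, hy3, _⟩ := hQmem y hy
    exact hT.colDistinct x y j ⟨hx1, hx2, hj, hx3⟩ ⟨hy1, hy2, hj, hy3⟩ hne hxy
  have himg : Finset.image (fun r => T r j) Q ⊆ Finset.Icc 1 b := by
    intro v hv
    simp only [Finset.mem_image] at hv
    obtain ⟨r, hr, rfl⟩ := hv
    obtain ⟨h1, h2, h3, h4⟩ := hQmem r hr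
    exact Finset.mem_Icc.mpr ⟨hT.pos r j ⟨h1, h2, hj, h3⟩, h4⟩
  have hcard : P.card + 2 ≤ b := by
    have h1 : (Q.image (fun r => T r j)).card = Q.card := Finset.card_image_of_injOn hinj
    have h2 := Finset.card_le_card himg
    rw [h1, hQcard] at h2
    rw [Nat.card_Icc] at h2
    omega
  set M := (Finset.Icc 1 b).filter (fun r => ¬ j ≤ α r) with hM
  have hPM : P.card + M.card = b := by
    rw [hP, hM, Finset.card_filter_add_card_filter_not, Nat.card_Icc]
    omega
  have hM2 : 1 < M.card := by omega
  obtain ⟨a, ha, c, hc, hac⟩ := Finset.one_lt_card.mp hM2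
  have hMprop : ∀ m ∈ M, 1 ≤ m ∧ m ≤ b ∧ α m < j := by
    intro m hm
    simp only [hM, Finset.mem_filter, Finset.mem_Icc] at hm
    exact ⟨hm.1.1, hm.1.2, by omega⟩
  have hallM : ∀ m ∈ M, α m = j - 1 := by
    intro m hm
    obtain ⟨hm1, hm2, hm3⟩ := hMprop m hm
    by_cases hma : m = a
    · obtain ⟨hc1, hc2, hc3⟩ := hMprop c hc
      rcases lt_trichotomy m c with hlt | heq | hgt
      · exact (patPair hav hm1 hlt hc2 hbi hii hin hm3 hc3 hji hji').1
      · exact absurd (hma.symm.trans heq) hac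
      · exact (patPair hav hc1 hgt hm2 hbi hii hin hc3 hm3 hji hji').2
    · obtain ⟨ha1, ha2, ha3⟩ := hMprop a ha
      rcases lt_trichotomy m a with hlt | heq | hgt
      · exact (patPair hav hm1 hlt ha2 hbi hii hin hm3 ha3 hji hji').1
      · exact absurd heq hma
      · exact (patPair hav ha1 hgt hm2 hbi hii hin ha3 hm3 hji hji').2
  have hcol : ∀ r, 1 ≤ r → r ≤ b → j ≤ α r + 1 := by
    intro r h1 h2
    by_cases h : j ≤ α r
    · omega
    · have hrM : r ∈ M := by
        simp only [hM, Finset.mem_filter, Finset.mem_Icc]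
        exact ⟨⟨h1, h2⟩, h⟩
      have := hallM r hrM
      omega
  have := noExtra hT hpos hb1 hbn hj hcol i hbi (by omega) hji
  omega

end Auxiliary

theorem stmt10 (n : ℕ) (α : ℕ → ℕ) (hpos : ∀ i, 1 ≤ i → i ≤ n → 1 ≤ α i)
    (hav : AvoidsKM n α) (T : ℕ → ℕ → ℕ) (hT : IsQKT n α T)
    (b : ℕ) (hb1 : 1 ≤ b) (hbn : b ≤ n) :
    ∑ i ∈ Finset.Icc 1 b, wtOf n α T i ≤
      (∑ i ∈ Finset.Icc 1 b, α i) + flexC n α b := by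
  classical
  set S := (Boxes n α).filter (fun x => T x.1 x.2 ≤ b) with hSdef
  have h1 : ∑ i ∈ Finset.Icc 1 b, wtOf n α T i = S.card := by
    unfold wtOf
    rw [← Finset.card_biUnion]
    · congr 1
      ext x
      simp only [Finset.mem_biUnion, Finset.mem_filter, Finset.mem_Icc, hSdef]
      constructor
      · rintro ⟨i, ⟨hi1, hi2⟩, hxB, hTx⟩
        exact ⟨hxB, by omega⟩
      · rintro ⟨hxB, hTx⟩
        have hin : InD n α x.1 x.2 := mem_Boxes.mp hxB
        exact ⟨T x.1 x.2, ⟨hT.pos _ _ hin, hTx⟩, hxB, rfl⟩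
    · intro u _ w _ huw
      apply Finset.disjoint_left.mpr
      intro x hx1 hx2
      simp only [Finset.mem_filter] at hx1 hx2
      exact huw (hx1.2 ▸ hx2.2.symm ▸ rfl)
  have h2 : (S.filter (fun x => x.1 ≤ b)).card + (S.filter (fun x => ¬ x.1 ≤ b)).card
      = S.card := Finset.card_filter_add_card_filter_not _
  set S₂ := S.filter (fun x => ¬ x.1 ≤ b) with hS₂
  have h3 : S.filter (fun x => x.1 ≤ b) = (Boxes n α).filter (fun x => x.1 ≤ b) := by
    rw [hSdef, Finset.filter_filter]
    apply Finset.filter_congr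
    intro x hx
    have hin := mem_Boxes.mp hx
    constructor
    · rintro ⟨_, h⟩; exact h
    · intro h; exact ⟨le_trans (hT.rowBound _ _ hin) h, h⟩
  have h4 : ((Boxes n α).filter (fun x => x.1 ≤ b)).card = ∑ i ∈ Finset.Icc 1 b, α i := by
    have heq : (Boxes n α).filter (fun x => x.1 ≤ b)
        = (Finset.Icc 1 b).biUnion (fun i => (Finset.Icc 1 (α i)).image (fun j => (i, j))) := by
      ext x
      simp only [Boxes, Finset.mem_filter, Finset.mem_biUnion, Finset.mem_image, Finset.mem_Icc]
      constructor
      · rintro ⟨⟨i, ⟨hi1, hi2⟩, jj, hjj, rfl⟩, hb'⟩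
        exact ⟨i, ⟨hi1, hb'⟩, jj, hjj, rfl⟩
      · rintro ⟨i, ⟨hi1, hib⟩, jj, hjj, rfl⟩
        exact ⟨⟨i, ⟨hi1, le_trans hib hbn⟩, jj, hjj, rfl⟩, hib⟩
    rw [heq, Finset.card_biUnion]
    · apply Finset.sum_congr rfl
      intro i _
      rw [Finset.card_image_of_injective _ (fun a b h => by
        simpa using (Prod.mk.injEq i a i b).mp h)]
      rw [Nat.card_Icc]; omega
    · intro u _ w _ huw
      apply Finset.disjoint_left.mpr
      intro x hx1 hx2
      simp only [Finset.mem_image] at hx1 hx2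
      obtain ⟨jj, _, rfl⟩ := hx1
      obtain ⟨jj', _, he⟩ := hx2
      exact huw (congrArg Prod.fst he).symm
  have hmemS₂ : ∀ x ∈ S₂, InD n α x.1 x.2 ∧ b < x.1 ∧ T x.1 x.2 ≤ b := by
    intro x hx
    simp only [hS₂, hSdef, Finset.mem_filter] at hx
    exact ⟨mem_Boxes.mp hx.1.1, by omega, hx.1.2⟩
  have h5 : S₂.card ≤ flexC n α b := by
    have hcol2 : ∀ x ∈ S₂, Aev n α (rminC α b) + 2 ≤ x.2 ∧ x.2 ≤ Aev n α (rmaxC n α b) := by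
      intro x hx
      obtain ⟨⟨hx1, hxn, hx2, hxa⟩, hbx, hTx⟩ := hmemS₂ x hx
      constructor
      · by_contra h; push_neg at h
        have hcol : ∀ r, 1 ≤ r → r ≤ b → x.2 ≤ α r + 1 := fun r h1 h2 => by
          have := vmin hav hb1 hbn r h1 h2; omega
        have := noExtra hT hpos hb1 hbn hx2 hcol x.1 hbx hxn hxa
        omega
      · exact le_trans hxa (rmax_ub hav hb1 hbn x.1 hbx hxn)
    have hinj : Set.InjOn (fun x : ℕ × ℕ => x.2) S₂ := by
      intro x hx y hy hxy
      obtain ⟨boxx, hbx, hTx⟩ := hmemS₂ x hx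
      obtain ⟨boxy, hby, hTy⟩ := hmemS₂ y hy
      by_contra hne
      have hxy' : x.2 = y.2 := by simpa using hxy
      have hne1 : x.1 ≠ y.1 := fun h => hne (Prod.ext h hxy')
      have hya : x.2 ≤ α y.1 := by rw [hxy']; exact boxy.2.2.2
      have hTy' : T y.1 x.2 ≤ b := by rw [hxy']; exact hTy
      rcases lt_or_gt_of_ne hne1 with h | h
      · exact noTwo hav hT hpos hb1 hbn hbx h boxy.2.1 boxx.2.2.1 boxx.2.2.2 hya hTx hTy'
      · exact noTwo hav hT hpos hb1 hbn hby h boxx.2.1 boxx.2.2.1 hya boxx.2.2.2 hTy' hTx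
    calc S₂.card = (S₂.image (fun x : ℕ × ℕ => x.2)).card :=
          (Finset.card_image_of_injOn hinj).symm
      _ ≤ (Finset.Icc (Aev n α (rminC α b) + 2) (Aev n α (rmaxC n α b))).card := by
          apply Finset.card_le_card
          intro u hu
          simp only [Finset.mem_image] at hu
          obtain ⟨x, hx, rfl⟩ := hu
          exact Finset.mem_Icc.mpr (hcol2 x hx)
      _ ≤ flexC n α b := by
          rw [Nat.card_Icc]
          unfold flexC
          omega
  rw [h3, h4] at h2
  omega
end

section
/- Key polynomials are stable under adding a column: for any weak composition α of length n, if α' is defined by α'_i = α_i + 1 for all i, then κ_{α'} = x_1 x_2 ⋯ x_n · κ_α. -/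
open Finset

open MvPolynomial in
/-- `IsKey n α f` : `f` is the key polynomial `κ_α` (variables `x_1, ..., x_n`),
defined by `κ_α = x^α` for weakly decreasing `α`, and `κ_α = π_j (κ_α̂)` where
`α̂` interchanges `α_j < α_{j+1}` and `π_j` is the Demazure operator
`π_j f = (x_j f - x_{j+1} s_j f)/(x_j - x_{j+1})`. -/
inductive IsKey (n : ℕ) : (ℕ → ℕ) → MvPolynomial ℕ ℤ → Prop where
  | base (α : ℕ → ℕ) (hdec : ∀ i j, 1 ≤ i → i ≤ j → j ≤ n → α j ≤ α i) :
      IsKey n α (∏ i ∈ Finset.Icc 1 n, X i ^ α i)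
  | step (α : ℕ → ℕ) (j : ℕ) (hj : 1 ≤ j) (hjn : j + 1 ≤ n) (hlt : α j < α (j + 1))
      (f g : MvPolynomial ℕ ℤ)
      (hf : IsKey n (fun t => if t = j then α (j + 1) else if t = j + 1 then α j else α t) f)
      (heq : (X j - X (j + 1)) * g =
        X j * f - X (j + 1) * (rename (Equiv.swap j (j + 1) : ℕ → ℕ) f)) :
      IsKey n α g

open MvPolynomial in
lemma swap_prod (n j : ℕ) (hj : 1 ≤ j) (hjn : j + 1 ≤ n) :
    (rename (Equiv.swap j (j + 1) : ℕ → ℕ) (∏ i ∈ Finset.Icc 1 n, (X i : MvPolynomial ℕ ℤ)))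
      = ∏ i ∈ Finset.Icc 1 n, X i := by
  rw [map_prod]
  simp only [rename_X]
  apply Finset.prod_nbij' (fun i => Equiv.swap j (j+1) i) (fun i => Equiv.swap j (j+1) i)
  · intro a ha
    simp only [mem_Icc] at ha ⊢
    rcases eq_or_ne a j with rfl | h1
    · rw [Equiv.swap_apply_left]; omega
    rcases eq_or_ne a (j+1) with rfl | h2
    · rw [Equiv.swap_apply_right]; omega
    · rw [Equiv.swap_apply_of_ne_of_ne h1 h2]; exact ha
  · intro a ha
    simp only [mem_Icc] at ha ⊢
    rcases eq_or_ne a j with rfl | h1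
    · rw [Equiv.swap_apply_left]; omega
    rcases eq_or_ne a (j+1) with rfl | h2
    · rw [Equiv.swap_apply_right]; omega
    · rw [Equiv.swap_apply_of_ne_of_ne h1 h2]; exact ha
  · intro a _; simp
  · intro a _; simp
  · intro a _; rfl

open MvPolynomial in
theorem stmt15 (n : ℕ) (α : ℕ → ℕ) (f : MvPolynomial ℕ ℤ) (hf : IsKey n α f) :
    IsKey n (fun i => α i + 1) ((∏ i ∈ Finset.Icc 1 n, X i) * f) := by
  induction hf with
  | base β hdec =>
      have : (∏ i ∈ Finset.Icc 1 n, (X i : MvPolynomial ℕ ℤ)) *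
          (∏ i ∈ Finset.Icc 1 n, X i ^ β i) = ∏ i ∈ Finset.Icc 1 n, X i ^ (β i + 1) := by
        rw [← Finset.prod_mul_distrib]
        refine Finset.prod_congr rfl fun i _ => ?_
        ring
      rw [this]
      exact IsKey.base _ (fun i j h1 h2 h3 => by
        have := hdec i j h1 h2 h3; omega)
  | step β j hj hjn hlt f g hf heq ih =>
      refine IsKey.step _ j hj hjn (by omega) ((∏ i ∈ Finset.Icc 1 n, X i) * f) _ ?_ ?_
      · convert ih using 2 with t
        by_cases h1 : t = j <;> by_cases h2 : t = j + 1 <;> simp [h1, h2]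
      · rw [map_mul, swap_prod n j hj hjn]
        ring_nf
        ring_nf at heq
        linear_combination (∏ i ∈ Finset.Icc 1 n, (X i : MvPolynomial ℕ ℤ)) * heq
end

section
/- Let D be a Kohnert diagram in KD(α), let i' < i and j' < j, suppose (i',j') and (i,j) are the rightmost boxes of rows i' and i respectively, and every row i'' with i' ≤ i'' < i is initial (its boxes form a prefix (i'',1),...,(i'',j'') or it is empty). Then the diagram D' obtained from D by replacing box (i,j) with (i',j) is also in KD(α). -/
open Finset

/-- A single Kohnert move: the rightmost box `(i, j)` of row `i` drops to the
highest empty position `(i', j)` below it in column `j`. -/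
def KMove (D D' : Finset (ℕ × ℕ)) : Prop :=
  ∃ i j i', (i, j) ∈ D ∧ (∀ c, (i, c) ∈ D → c ≤ j) ∧
    1 ≤ i' ∧ i' < i ∧ (i', j) ∉ D ∧ (∀ r, i' < r → r < i → (r, j) ∈ D) ∧
    D' = insert (i', j) (D.erase (i, j))

/-- The set of Kohnert diagrams of `α`. -/
def KD (n : ℕ) (α : ℕ → ℕ) : Set (Finset (ℕ × ℕ)) :=
  {D | Relation.ReflTransGen KMove (Boxes n α) D}

lemma aux19 (n : ℕ) (α : ℕ → ℕ) : ∀ i (D : Finset (ℕ × ℕ)), D ∈ KD n α → ∀ i' j,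
    1 ≤ i' → i' < i → (i, j) ∈ D → (∀ c, (i, c) ∈ D → c ≤ j) → (i', j) ∉ D →
    (∀ r, i' < r → r < i → (r, j) ∈ D ∨ ∀ c, (r, c) ∈ D → c < j) →
    insert (i', j) (D.erase (i, j)) ∈ KD n α := by
  intro i
  induction i using Nat.strong_induction_on with
  | _ i IH =>
    intro D hD i' j hi' hii hij hrm hnot hrows
    set S := (Finset.range i).filter (fun r => i' ≤ r ∧ (r, j) ∉ D) with hS
    have hi'S : i' ∈ S := by
      simp [hS, Finset.mem_filter, Finset.mem_range, hii, hnot]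
    have hSne : S.Nonempty := ⟨i', hi'S⟩
    set r1 := S.max' hSne with hr1
    have hr1S : r1 ∈ S := S.max'_mem hSne
    have hr1lt : r1 < i := (Finset.mem_filter.mp hr1S).1 |> Finset.mem_range.mp
    have hr1ge : i' ≤ r1 := (Finset.mem_filter.mp hr1S).2.1
    have hr1not : (r1, j) ∉ D := (Finset.mem_filter.mp hr1S).2.2
    have hfill : ∀ r, r1 < r → r < i → (r, j) ∈ D := by
      intro r hr hri
      by_contra h
      have : r ∈ S := by
        simp [hS, Finset.mem_filter, Finset.mem_range, hri, h, le_trans hr1ge hr.le]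
      exact absurd (S.le_max' r this) (not_le.mpr hr)
    have hmove : KMove D (insert (r1, j) (D.erase (i, j))) :=
      ⟨i, j, r1, hij, hrm, le_trans hi' hr1ge, hr1lt, hr1not, hfill, rfl⟩
    have hD1 : insert (r1, j) (D.erase (i, j)) ∈ KD n α := hD.tail hmove
    rcases eq_or_lt_of_le hr1ge with heq | hlt
    · rw [heq]; exact hD1
    · set D1 := insert (r1, j) (D.erase (i, j)) with hD1def
      have hne : (r1, j) ∉ D.erase (i, j) := fun h => hr1not (Finset.mem_of_mem_erase h)
      have herase : D1.erase (r1, j) = D.erase (i, j) := by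
        rw [hD1def, Finset.erase_insert hne]
      have hmem1 : (r1, j) ∈ D1 := Finset.mem_insert_self _ _
      have hrow1 : ∀ c, (r1, c) ∈ D1 → c ≤ j := by
        intro c hc
        rcases Finset.mem_insert.mp hc with h | h
        · exact le_of_eq (congrArg Prod.snd h)
        · have hcD : (r1, c) ∈ D := Finset.mem_of_mem_erase h
          rcases hrows r1 hlt hr1lt with h' | h'
          · exact absurd h' hr1not
          · exact (h' c hcD).le
      have hnot1 : (i', j) ∉ D1 := by
        intro h
        rcases Finset.mem_insert.mp h with h | h
        · exact absurd (congrArg Prod.fst h) (Nat.ne_of_lt hlt)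
        · exact hnot (Finset.mem_of_mem_erase h)
      have hrows1 : ∀ r, i' < r → r < r1 → (r, j) ∈ D1 ∨ ∀ c, (r, c) ∈ D1 → c < j := by
        intro r hr hrr1
        rcases hrows r hr (hrr1.trans hr1lt) with h | h
        · exact Or.inl (Finset.mem_insert_of_mem (Finset.mem_erase.mpr
            ⟨by simp [Prod.ext_iff]; omega, h⟩))
        · right
          intro c hc
          rcases Finset.mem_insert.mp hc with hh | hh
          · exact absurd (congrArg Prod.fst hh) (Nat.ne_of_lt hrr1)
          · exact h c (Finset.mem_of_mem_erase hh)
      have := IH r1 hr1lt D1 hD1 i' j hi' hlt hmem1 hrow1 hnot1 hrows1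
      rwa [herase] at this

theorem stmt19 (n : ℕ) (α : ℕ → ℕ) (D : Finset (ℕ × ℕ)) (hD : D ∈ KD n α)
    (i i' j j' : ℕ) (hi' : 1 ≤ i') (hii : i' < i) (hjj : j' < j)
    (hrm' : (i', j') ∈ D ∧ ∀ c, (i', c) ∈ D → c ≤ j')
    (hrm : (i, j) ∈ D ∧ ∀ c, (i, c) ∈ D → c ≤ j)
    (hinit : ∀ r, i' ≤ r → r < i →
      ∀ c c', (r, c) ∈ D → 1 ≤ c' → c' ≤ c → (r, c') ∈ D) :
    insert (i', j) (D.erase (i, j)) ∈ KD n α := by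
  have hj1 : 1 ≤ j := Nat.one_le_iff_ne_zero.mpr (by omega)
  have hnot : (i', j) ∉ D := fun h => absurd (hrm'.2 j h) (not_le.mpr hjj)
  apply aux19 n α i D hD i' j hi' hii hrm.1 hrm.2 hnot
  intro r hr hri
  by_cases h : (r, j) ∈ D
  · exact Or.inl h
  · right
    intro c hc
    by_contra hcj
    exact h (hinit r hr.le hri c j hc hj1 (not_lt.mp hcj))
end
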